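/- arXiv:1906.11378 — 8 statements merged into one kernel-verified Lean document; each statement's English description precedes it below -/
import Mathlib

section
/- Let N, m be positive integers and consider the block space (ℝ^m)^N, with (w)_t ∈ ℝ^m denoting the t-th block of w. For each t ∈ {1, …, N} let n_t be a positive integer, let M_t : (ℝ^m)^N → ℝ^{n_t} be a linear map satisfying ‖(w)_t‖ ≤ ‖M_t w‖ for every w ∈ (ℝ^m)^N, and let f_t : ℝ^{n_t} → ℝ be differentiable and μ-strongly convex (μ > 0). Let G : (ℝ^m)^N → ℝ be convex. Then the function w ↦ Σ_{t=1}^N f_t(M_t w) + G(w) is μ-strongly convex on (ℝ^m)^N. -/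
lemma aux_sc {E : Type*} [NormedAddCommGroup E] [InnerProductSpace ℝ E] [CompleteSpace E]
    {μ : ℝ} {f : E → ℝ}
    (hsc : ∀ x y : E, f x + (inner ℝ (gradient f x) (y - x) : ℝ) + μ / 2 * ‖y - x‖ ^ 2 ≤ f y)
    (x y : E) {a b : ℝ} (ha : 0 ≤ a) (hb : 0 ≤ b) (hab : a + b = 1) :
    f (a • x + b • y) ≤ a * f x + b * f y - a * b * (μ / 2 * ‖x - y‖ ^ 2) := by
  set p := a • x + b • y with hp
  have hb' : b = 1 - a := by linarith
  have hxp : x - p = b • (x - y) := by rw [hp, hb']; module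
  have hyp : y - p = a • (y - x) := by rw [hp, hb']; module
  have hx := hsc p x
  have hy := hsc p y
  set g := gradient f p
  have hzero : a * (inner ℝ g (b • (x - y)) : ℝ) + b * (inner ℝ g (a • (y - x)) : ℝ) = 0 := by
    rw [← real_inner_smul_right, ← real_inner_smul_right, ← inner_add_right]
    have : a • b • (x - y) + b • a • (y - x) = (0 : E) := by module
    rw [this, inner_zero_right]
  rw [hxp] at hx
  rw [hyp] at hy
  rw [norm_smul, Real.norm_eq_abs, abs_of_nonneg hb] at hx
  rw [norm_smul, Real.norm_eq_abs, abs_of_nonneg ha, norm_sub_rev] at hy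
  have hc : a * (μ / 2 * (b * ‖x - y‖) ^ 2) + b * (μ / 2 * (a * ‖x - y‖) ^ 2)
      = a * b * (μ / 2 * ‖x - y‖ ^ 2) := by
    linear_combination (μ / 2 * a * b * ‖x - y‖ ^ 2) * hab
  have hF : a * f p + b * f p = f p := by linear_combination (f p) * hab
  nlinarith [mul_le_mul_of_nonneg_left hx ha, mul_le_mul_of_nonneg_left hy hb, hzero, hc, hF]

/-- Strong-convexity half of Lemma 1(i): if each `f t` is differentiable and `μ`-strongly
convex, each linear map `M t` satisfies `‖(w)_t‖ ≤ ‖M t w‖`, and `G` is convex, then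
`w ↦ ∑ t, f t (M t w) + G w` is `μ`-strongly convex on the block space `(ℝ^m)^N`. -/
theorem stmt_1 {N m : ℕ} (hN : 0 < N) (hm : 0 < m) (μ : ℝ) (hμ : 0 < μ)
    (n : Fin N → ℕ)
    (M : (t : Fin N) →
      (PiLp 2 fun _ : Fin N => EuclideanSpace ℝ (Fin m)) →ₗ[ℝ] EuclideanSpace ℝ (Fin (n t)))
    (hM : ∀ (t : Fin N) (w : PiLp 2 fun _ : Fin N => EuclideanSpace ℝ (Fin m)),
      ‖w t‖ ≤ ‖M t w‖)
    (f : (t : Fin N) → EuclideanSpace ℝ (Fin (n t)) → ℝ)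
    (hdiff : ∀ t, Differentiable ℝ (f t))
    (hsc : ∀ (t : Fin N) (x y : EuclideanSpace ℝ (Fin (n t))),
      f t x + (inner ℝ (gradient (f t) x) (y - x) : ℝ) + μ / 2 * ‖y - x‖ ^ 2 ≤ f t y)
    (G : (PiLp 2 fun _ : Fin N => EuclideanSpace ℝ (Fin m)) → ℝ)
    (hG : ConvexOn ℝ Set.univ G) :
    StrongConvexOn Set.univ μ (fun w => (∑ t : Fin N, f t (M t w)) + G w) := by
  refine ⟨convex_univ, fun x _ y _ a b ha hb hab => ?_⟩
  simp only [smul_eq_mul]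
  have hMsmul : ∀ t : Fin N, M t (a • x + b • y) = a • M t x + b • M t y := by
    intro t; rw [map_add, map_smul, map_smul]
  have hsum : ∀ t : Fin N, f t (M t (a • x + b • y))
      ≤ a * f t (M t x) + b * f t (M t y) - a * b * (μ / 2 * ‖(x - y) t‖ ^ 2) := by
    intro t
    rw [hMsmul t]
    refine le_trans (aux_sc (hsc t) (M t x) (M t y) ha hb hab) ?_
    have h1 : ‖(x - y) t‖ ≤ ‖M t x - M t y‖ := by
      rw [← map_sub]; exact hM t (x - y)
    have h2 : ‖(x - y) t‖ ^ 2 ≤ ‖M t x - M t y‖ ^ 2 :=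
      pow_le_pow_left₀ (norm_nonneg _) h1 2
    have hμab : 0 ≤ a * b * (μ / 2) := by positivity
    nlinarith
  have hnorm : ∑ t : Fin N, ‖(x - y) t‖ ^ 2 = ‖x - y‖ ^ 2 := by
    rw [PiLp.norm_sq_eq_of_L2]
  have hGineq : G (a • x + b • y) ≤ a * G x + b * G y :=
    hG.2 (Set.mem_univ x) (Set.mem_univ y) ha hb hab
  have hS : ∑ t : Fin N, f t (M t (a • x + b • y))
      ≤ ∑ t : Fin N, (a * f t (M t x) + b * f t (M t y) - a * b * (μ / 2 * ‖(x - y) t‖ ^ 2)) :=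
    Finset.sum_le_sum fun t _ => hsum t
  rw [Finset.sum_sub_distrib, Finset.sum_add_distrib, ← Finset.mul_sum, ← Finset.mul_sum] at hS
  have hS2 : ∑ t : Fin N, a * b * (μ / 2 * ‖(x - y) t‖ ^ 2) = a * b * (μ / 2 * ‖x - y‖ ^ 2) := by
    rw [← Finset.mul_sum, ← Finset.mul_sum, hnorm]
  rw [hS2] at hS
  linarith
end

section
/- Let N, m, T be positive integers and consider the block space (ℝ^m)^N, with (w)_s ∈ ℝ^m denoting the s-th block of w. For each t ∈ {1, …, T} let S_t ⊆ {1, …, N} be an index set, and suppose every index s ∈ {1, …, N} belongs to at most p of the sets S_1, …, S_T. For each t let M_t : (ℝ^m)^N → ℝ^{n_t} be a linear map satisfying ‖M_t w‖² ≤ Σ_{s ∈ S_t} ‖(w)_s‖² for every w, and let f_t : ℝ^{n_t} → ℝ be differentiable with l-Lipschitz gradient (l > 0). Then C(w) = Σ_{t=1}^T f_t(M_t w) satisfies C(w') ≤ C(w) + ⟨∇C(w), w'−w⟩ + (p·l/2)‖w'−w‖² for all w, w'; in particular C is p·l-smooth. -/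
open InnerProductSpace intervalIntegral

variable {F : Type*} [NormedAddCommGroup F] [InnerProductSpace ℝ F] [CompleteSpace F]

lemma fderiv_eq_inner_gradient (f : F → ℝ) {z : F} (h : DifferentiableAt ℝ f z) (u : F) :
    fderiv ℝ f z u = inner ℝ (gradient f z) u := by
  have := h.hasGradientAt.hasFDerivAt.fderiv
  rw [this]
  simp [InnerProductSpace.toDual_apply_apply]

lemma descent_lemma (f : F → ℝ) {l : ℝ} (hl : 0 ≤ l)
    (hdiff : Differentiable ℝ f)
    (hlip : LipschitzWith l.toNNReal (gradient f)) (x y : F) :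
    f y ≤ f x + inner ℝ (gradient f x) (y - x) + l / 2 * ‖y - x‖ ^ 2 := by
  set v := y - x with hv
  have hline : ∀ τ : ℝ, HasDerivAt (fun τ : ℝ => x + τ • v) v τ := by
    intro τ
    simpa using ((hasDerivAt_id τ).smul_const v).const_add x
  have hg : ∀ τ : ℝ, HasDerivAt (fun τ : ℝ => f (x + τ • v))
      (inner ℝ (gradient f (x + τ • v)) v : ℝ) τ := by
    intro τ
    have h1 := (hdiff (x + τ • v)).hasFDerivAt.comp_hasDerivAt τ (hline τ)
    rwa [fderiv_eq_inner_gradient f (hdiff _) v] at h1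
  have hgradcont : Continuous (gradient f) := hlip.continuous
  have hcont : Continuous fun τ : ℝ => (inner ℝ (gradient f (x + τ • v)) v : ℝ) := by
    exact (hgradcont.comp (by continuity)).inner continuous_const
  have hint : IntervalIntegrable (fun τ : ℝ => (inner ℝ (gradient f (x + τ • v)) v : ℝ))
      MeasureTheory.volume 0 1 := hcont.intervalIntegrable 0 1
  have hftc : ∫ τ in (0:ℝ)..1, (inner ℝ (gradient f (x + τ • v)) v : ℝ) =
      f y - f x := by
    have := intervalIntegral.integral_eq_sub_of_hasDerivAt
      (fun τ _ => hg τ) hint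
    simpa [hv] using this
  have hbound : ∀ τ ∈ Set.Icc (0:ℝ) 1,
      (inner ℝ (gradient f (x + τ • v)) v : ℝ) ≤ inner ℝ (gradient f x) v + l * τ * ‖v‖ ^ 2 := by
    intro τ hτ
    have h1 : (inner ℝ (gradient f (x + τ • v)) v : ℝ) - inner ℝ (gradient f x) v
        = inner ℝ (gradient f (x + τ • v) - gradient f x) v := by
      rw [inner_sub_left]
    have h2 : (inner ℝ (gradient f (x + τ • v) - gradient f x) v : ℝ)
        ≤ ‖gradient f (x + τ • v) - gradient f x‖ * ‖v‖ := real_inner_le_norm _ _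
    have h3 : ‖gradient f (x + τ • v) - gradient f x‖ ≤ l * (τ * ‖v‖) := by
      have := hlip.dist_le_mul (x + τ • v) x
      simp only [dist_eq_norm, add_sub_cancel_left] at this
      calc ‖gradient f (x + τ • v) - gradient f x‖ ≤ l.toNNReal * ‖τ • v‖ := this
        _ = l * (τ * ‖v‖) := by
            rw [norm_smul, Real.coe_toNNReal l hl, Real.norm_eq_abs, abs_of_nonneg hτ.1]
    nlinarith [h2.trans (mul_le_mul_of_nonneg_right h3 (norm_nonneg v))]
  have hintrhs : IntervalIntegrable
      (fun τ : ℝ => (inner ℝ (gradient f x) v : ℝ) + l * τ * ‖v‖ ^ 2)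
      MeasureTheory.volume 0 1 := by
    apply Continuous.intervalIntegrable; continuity
  have hmono := intervalIntegral.integral_mono_on (by norm_num) hint hintrhs hbound
  have hrhs : ∫ τ in (0:ℝ)..1, ((inner ℝ (gradient f x) v : ℝ) + l * τ * ‖v‖ ^ 2)
      = inner ℝ (gradient f x) v + l / 2 * ‖v‖ ^ 2 := by
    rw [intervalIntegral.integral_add (by apply Continuous.intervalIntegrable; continuity)
      (by apply Continuous.intervalIntegrable; continuity)]
    simp only [intervalIntegral.integral_const, smul_eq_mul]
    have : ∫ τ in (0:ℝ)..1, l * τ * ‖v‖ ^ 2 = l * ‖v‖^2 * ∫ τ in (0:ℝ)..1, τ := by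
      rw [← intervalIntegral.integral_const_mul]; congr 1; ext τ; ring
    rw [this, integral_id]
    ring
  rw [hftc, hrhs] at hmono
  linarith



set_option maxHeartbeats 1000000 in
set_option synthInstance.maxHeartbeats 400000 in
/-- Smoothness half of Lemma 1(i): if each `f t` has an `l`-Lipschitz gradient, each linear
map `M t` satisfies `‖M t w‖² ≤ ∑_{s ∈ S t} ‖(w)_s‖²`, and every block index belongs to at
most `p` of the index sets `S t`, then `C(w) = ∑ t, f t (M t w)` satisfies the `p·l`-smooth
quadratic upper bound. -/
theorem stmt_2 {N m T : ℕ} (hN : 0 < N) (hm : 0 < m) (hT : 0 < T)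
    (p : ℕ) (l : ℝ) (hl : 0 < l)
    (n : Fin T → ℕ)
    (S : Fin T → Finset (Fin N))
    (hp : ∀ s : Fin N, (Finset.univ.filter fun t => s ∈ S t).card ≤ p)
    (M : (t : Fin T) →
      (PiLp 2 fun _ : Fin N => EuclideanSpace ℝ (Fin m)) →ₗ[ℝ] EuclideanSpace ℝ (Fin (n t)))
    (hM : ∀ (t : Fin T) (w : PiLp 2 fun _ : Fin N => EuclideanSpace ℝ (Fin m)),
      ‖M t w‖ ^ 2 ≤ ∑ s ∈ S t, ‖w s‖ ^ 2)
    (f : (t : Fin T) → EuclideanSpace ℝ (Fin (n t)) → ℝ)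
    (hdiff : ∀ t, Differentiable ℝ (f t))
    (hlip : ∀ t, LipschitzWith (Real.toNNReal l) (gradient (f t))) :
    ∀ w w' : PiLp 2 fun _ : Fin N => EuclideanSpace ℝ (Fin m),
      (∑ t : Fin T, f t (M t w')) ≤
        (∑ t : Fin T, f t (M t w)) +
          (inner ℝ (gradient (fun v => ∑ t : Fin T, f t (M t v)) w) (w' - w) : ℝ) +
          (p : ℝ) * l / 2 * ‖w' - w‖ ^ 2 := by
  intro w w'
  set u := w' - w with hu
  -- continuous linear versions of the maps
  set Mc : (t : Fin T) → (PiLp 2 fun _ : Fin N => EuclideanSpace ℝ (Fin m)) →L[ℝ]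
      EuclideanSpace ℝ (Fin (n t)) := fun t => (M t).toContinuousLinearMap with hMc
  have hMc_apply : ∀ t v, Mc t v = M t v := fun t v => rfl
  -- fderiv of the sum
  have hC : HasFDerivAt (fun v : PiLp 2 fun _ : Fin N => EuclideanSpace ℝ (Fin m) =>
      ∑ t : Fin T, f t (M t v))
      (∑ t : Fin T, (fderiv ℝ (f t) (M t w)).comp (Mc t)) w := by
    apply HasFDerivAt.fun_sum
    intro t _
    exact ((hdiff t (M t w)).hasFDerivAt.comp w (Mc t).hasFDerivAt)
  -- the inner product term
  have hinner : (inner ℝ (gradient (fun v => ∑ t : Fin T, f t (M t v)) w) u : ℝ) =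
      ∑ t : Fin T, (inner ℝ (gradient (f t) (M t w)) (M t u) : ℝ) := by
    rw [← fderiv_eq_inner_gradient _ hC.differentiableAt u, hC.fderiv]
    simp only [ContinuousLinearMap.coe_sum', Finset.sum_apply, ContinuousLinearMap.coe_comp',
      Function.comp_apply]
    exact Finset.sum_congr rfl fun t _ =>
      fderiv_eq_inner_gradient (f t) (hdiff t (M t w)) (M t u)
  -- quadratic term bound
  have hquad : ∑ t : Fin T, ‖M t u‖ ^ 2 ≤ (p : ℝ) * ‖u‖ ^ 2 := by
    have h1 : ∑ t : Fin T, ‖M t u‖ ^ 2 ≤ ∑ t : Fin T, ∑ s ∈ S t, ‖u s‖ ^ 2 :=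
      Finset.sum_le_sum fun t _ => hM t u
    have h2 : ∑ t : Fin T, ∑ s ∈ S t, ‖u s‖ ^ 2 =
        ∑ s : Fin N, ∑ t ∈ Finset.univ.filter (fun t => s ∈ S t), ‖u s‖ ^ 2 := by
      apply Finset.sum_comm'
      intro t s
      simp
    have h3 : ∑ s : Fin N, ∑ t ∈ Finset.univ.filter (fun t => s ∈ S t), ‖u s‖ ^ 2
        ≤ (p : ℝ) * ‖u‖ ^ 2 := by
      have : ∀ s : Fin N, ∑ t ∈ Finset.univ.filter (fun t => s ∈ S t), ‖u s‖ ^ 2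
          ≤ (p : ℝ) * ‖u s‖ ^ 2 := by
        intro s
        rw [Finset.sum_const, nsmul_eq_mul]
        have := hp s
        have hns : (0:ℝ) ≤ ‖u s‖ ^ 2 := by positivity
        exact mul_le_mul_of_nonneg_right (by exact_mod_cast this) hns
      calc ∑ s : Fin N, ∑ t ∈ Finset.univ.filter (fun t => s ∈ S t), ‖u s‖ ^ 2
          ≤ ∑ s : Fin N, (p : ℝ) * ‖u s‖ ^ 2 := Finset.sum_le_sum fun s _ => this s
        _ = (p : ℝ) * ∑ s : Fin N, ‖u s‖ ^ 2 := by rw [Finset.mul_sum]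
        _ = (p : ℝ) * ‖u‖ ^ 2 := by rw [← PiLp.norm_sq_eq_of_L2]
    linarith [h1, h2 ▸ h3]
  -- per-term descent
  have hdesc : ∀ t : Fin T, f t (M t w') ≤ f t (M t w) +
      (inner ℝ (gradient (f t) (M t w)) (M t u) : ℝ) + l / 2 * ‖M t u‖ ^ 2 := by
    intro t
    have := descent_lemma (f t) hl.le (hdiff t) (hlip t) (M t w) (M t w')
    have heq : M t w' - M t w = M t u := by rw [hu, map_sub]
    rwa [heq] at this
  calc (∑ t : Fin T, f t (M t w'))
      ≤ ∑ t : Fin T, (f t (M t w) + (inner ℝ (gradient (f t) (M t w)) (M t u) : ℝ)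
          + l / 2 * ‖M t u‖ ^ 2) := Finset.sum_le_sum fun t _ => hdesc t
    _ = (∑ t : Fin T, f t (M t w)) + (∑ t : Fin T, (inner ℝ (gradient (f t) (M t w)) (M t u) : ℝ))
          + l / 2 * ∑ t : Fin T, ‖M t u‖ ^ 2 := by
        rw [Finset.sum_add_distrib, Finset.sum_add_distrib, Finset.mul_sum]
    _ ≤ (∑ t : Fin T, f t (M t w)) +
          (inner ℝ (gradient (fun v => ∑ t : Fin T, f t (M t v)) w) (w' - w) : ℝ) +
          (p : ℝ) * l / 2 * ‖w' - w‖ ^ 2 := by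
        rw [← hu, hinner]
        have : l / 2 * ∑ t : Fin T, ‖M t u‖ ^ 2 ≤ (p : ℝ) * l / 2 * ‖u‖ ^ 2 := by
          have h := mul_le_mul_of_nonneg_left hquad (by positivity : (0:ℝ) ≤ l / 2)
          calc l / 2 * ∑ t : Fin T, ‖M t u‖ ^ 2 ≤ l / 2 * ((p:ℝ) * ‖u‖^2) := h
            _ = (p : ℝ) * l / 2 * ‖u‖ ^ 2 := by ring
        linarith
end

section
/- Let n ≥ 1 and δ > 0. Let A ∈ ℝ^{n×n} be the cyclic shift matrix whose i-th row is the standard basis vector e_{i+1}ᵀ for 1 ≤ i ≤ n−1 and whose n-th row is e_1ᵀ, and let B = e_n ∈ ℝ^{n×1}. Let Q = δ·I_n and R = 1 (the 1×1 identity). Define q_n = (nδ + √(n²δ² + 4nδ))/2 and q_i = q_n − (n−i)δ for 1 ≤ i ≤ n. Then the diagonal matrix P = diag(q_1, …, q_n) is positive definite and satisfies the discrete-time algebraic Riccati equation P = Q + Aᵀ(P − P B (BᵀP B + R)^{−1} BᵀP)A. Moreover q_n > nδ and δ < q_1 < δ + 1. -/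
open Matrix

def predIdx (n : ℕ) (hn : 1 ≤ n) (j : Fin n) : Fin n :=
  ⟨if (j : ℕ) = 0 then n - 1 else (j : ℕ) - 1, by have := j.isLt; split <;> omega⟩

theorem predIdx_inj (n : ℕ) (hn : 1 ≤ n) {j k : Fin n}
    (h : predIdx n hn j = predIdx n hn k) : j = k := by
  have hj := j.isLt; have hk := k.isLt
  simp only [predIdx, Fin.mk.injEq] at h
  rw [Fin.ext_iff]
  split at h <;> split at h <;> omega

/-- Lemma "form of `P^e`": for the cyclic-shift system with `Q = δI`, `R = 1`, the diagonal
matrix `P = diag(q_1, …, q_n)` with `q_n = (nδ + √(n²δ² + 4nδ))/2`, `q_i = q_n − (n−i)δ`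
is positive definite, solves the discrete-time algebraic Riccati equation, and satisfies
`q_n > nδ` and `δ < q_1 < δ + 1`. -/
theorem stmt_3 (n : ℕ) (hn : 1 ≤ n) (δ : ℝ) (hδ : 0 < δ)
    (A : Matrix (Fin n) (Fin n) ℝ)
    (hA : ∀ i j : Fin n, A i j =
      if (i : ℕ) + 1 = (j : ℕ) ∨ ((i : ℕ) = n - 1 ∧ (j : ℕ) = 0) then 1 else 0)
    (B : Matrix (Fin n) (Fin 1) ℝ)
    (hB : ∀ (i : Fin n) (j : Fin 1), B i j = if (i : ℕ) = n - 1 then 1 else 0)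
    (Q : Matrix (Fin n) (Fin n) ℝ) (hQ : Q = δ • (1 : Matrix (Fin n) (Fin n) ℝ))
    (R : Matrix (Fin 1) (Fin 1) ℝ) (hR : R = 1)
    (qn : ℝ) (hqn : qn = ((n : ℝ) * δ + Real.sqrt (((n : ℝ) * δ) ^ 2 + 4 * n * δ)) / 2)
    (q : Fin n → ℝ) (hq : ∀ i : Fin n, q i = qn - ((n - 1 - (i : ℕ) : ℕ) : ℝ) * δ)
    (P : Matrix (Fin n) (Fin n) ℝ) (hP : P = Matrix.diagonal q) :
    P.PosDef ∧
      P = Q + Aᵀ * (P - P * B * (Bᵀ * P * B + R)⁻¹ * Bᵀ * P) * A ∧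
      (n : ℝ) * δ < qn ∧ δ < q ⟨0, hn⟩ ∧ q ⟨0, hn⟩ < δ + 1 := by
  -- Scalar facts
  have hn' : (0:ℝ) < n := by exact_mod_cast hn
  have harg : (0:ℝ) ≤ ((n : ℝ) * δ) ^ 2 + 4 * n * δ := by positivity
  have hs : Real.sqrt (((n : ℝ) * δ) ^ 2 + 4 * n * δ) ^ 2 = ((n : ℝ) * δ) ^ 2 + 4 * n * δ :=
    Real.sq_sqrt harg
  have hsnn := Real.sqrt_nonneg (((n : ℝ) * δ) ^ 2 + 4 * n * δ)
  have hnδ : 0 < (n:ℝ) * δ := by positivity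
  have hgt : (n:ℝ) * δ < qn := by nlinarith [hs, hsnn, hnδ]
  have key : qn ^ 2 = n * δ * qn + n * δ := by
    have h2 : 2 * qn - n * δ = Real.sqrt (((n : ℝ) * δ) ^ 2 + 4 * n * δ) := by
      rw [hqn]; ring
    nlinarith [hs, h2]
  have hqnpos : 0 < qn := lt_trans hnδ hgt
  have hne : qn + 1 ≠ 0 := by nlinarith
  have hfrac : qn / (qn + 1) = qn - n * δ := by
    field_simp
    nlinarith [key]
  have hcast : ((n - 1 : ℕ) : ℝ) = (n:ℝ) - 1 := by
    have := Nat.cast_sub hn (R := ℝ); simpa using this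
  -- Reformulate A and B via `predIdx` and the last index L
  have hL : n - 1 < n := by omega
  set L : Fin n := ⟨n - 1, hL⟩ with hLdef
  have hB' : ∀ (i : Fin n) (j : Fin 1), B i j = if i = L then 1 else 0 := by
    intro i j
    rw [hB]
    refine if_congr ?_ rfl rfl
    simp [Fin.ext_iff, hLdef]
  have hApred : ∀ i j : Fin n, A i j = if i = predIdx n hn j then 1 else 0 := by
    intro i j
    rw [hA]
    refine if_congr ?_ rfl rfl
    have hi := i.isLt; have hj := j.isLt
    rw [Fin.ext_iff]
    simp only [predIdx]
    split <;> omega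
  have hqL : q L = qn := by
    rw [hq]; simp [hLdef]
  -- q is positive
  have hqpos : ∀ i, 0 < q i := by
    intro i
    rw [hq]
    have h1 : ((n - 1 - (i:ℕ) : ℕ) : ℝ) ≤ (n:ℝ) - 1 := by
      calc ((n - 1 - (i:ℕ) : ℕ) : ℝ) ≤ ((n - 1 : ℕ) : ℝ) := by
            exact_mod_cast Nat.sub_le _ _
        _ = (n:ℝ) - 1 := hcast
    nlinarith
  -- Step 1 : BᵀPB + R
  have hBtPB : Bᵀ * P * B + R = (qn + 1) • (1 : Matrix (Fin 1) (Fin 1) ℝ) := by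
    ext i j
    fin_cases i; fin_cases j
    simp [Matrix.mul_apply, hB', hP, hR, Matrix.diagonal_apply, ite_mul, mul_ite,
      Finset.sum_ite_eq, Finset.sum_ite_eq', hqL]
  -- Step 2 : its inverse
  have hInv : (Bᵀ * P * B + R)⁻¹ = (qn + 1)⁻¹ • (1 : Matrix (Fin 1) (Fin 1) ℝ) := by
    apply Matrix.inv_eq_right_inv
    rw [hBtPB]
    simp [Matrix.smul_mul, Matrix.mul_smul, smul_smul, inv_mul_cancel₀ hne]
  -- Step 3 : the inner matrix is diagonal
  set m : Fin n → ℝ := fun i => if i = L then qn / (qn + 1) else q i with hmdef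
  have hmL : m L = qn / (qn + 1) := by simp [hmdef]
  have hM : P - P * B * (Bᵀ * P * B + R)⁻¹ * Bᵀ * P = Matrix.diagonal m := by
    rw [hInv]
    ext i j
    by_cases h : i = j
    · subst h
      by_cases hiL : i = L
      · subst hiL
        simp [Matrix.mul_apply, hB', hP, Matrix.diagonal_apply, ite_mul, mul_ite,
          Finset.sum_ite_eq, Finset.sum_ite_eq', hqL, Matrix.one_apply, Matrix.sub_apply, hmdef]
        field_simp
        ring
      · simp [Matrix.mul_apply, hB', hP, Matrix.diagonal_apply, ite_mul, mul_ite,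
          Finset.sum_ite_eq, Finset.sum_ite_eq', hiL, Matrix.one_apply, Matrix.sub_apply, hmdef]
    · simp [Matrix.mul_apply, hB', hP, Matrix.diagonal_apply, ite_mul, mul_ite,
        Finset.sum_ite_eq, Finset.sum_ite_eq', h, Ne.symm h, Matrix.one_apply, Matrix.sub_apply]
      intro hj hi
      exact absurd (hi.trans hj.symm) h
  -- Step 4 : conjugating a diagonal matrix by the shift
  have hAMA : Aᵀ * Matrix.diagonal m * A =
      Matrix.diagonal (fun j => m (predIdx n hn j)) := by
    ext j k
    by_cases h : j = k
    · subst h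
      simp [Matrix.mul_apply, hApred, Matrix.diagonal_apply, ite_mul, mul_ite,
        Finset.sum_ite_eq, Finset.sum_ite_eq']
    · have h2 : predIdx n hn j ≠ predIdx n hn k := fun hc => h (predIdx_inj n hn hc)
      simp [Matrix.mul_apply, hApred, Matrix.diagonal_apply, ite_mul, mul_ite,
        Finset.sum_ite_eq, Finset.sum_ite_eq', h, h2, Ne.symm h2]
  -- The key scalar recursion : q j = δ + m (predIdx j)
  have hrec : ∀ j : Fin n, q j = δ + m (predIdx n hn j) := by
    intro j
    have hj := j.isLt
    by_cases h0 : (j:ℕ) = 0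
    · have hpred : predIdx n hn j = L := by
        rw [Fin.ext_iff]; simp [predIdx, h0, hLdef]
      rw [hpred, hmL, hfrac, hq]
      have : (n - 1 - (j:ℕ) : ℕ) = n - 1 := by omega
      rw [this, hcast]
      ring
    · have hlt : (j:ℕ) - 1 < n := by omega
      have hpred : predIdx n hn j = ⟨(j:ℕ) - 1, hlt⟩ := by
        rw [Fin.ext_iff]; simp [predIdx, h0]
      have hneL : (⟨(j:ℕ) - 1, hlt⟩ : Fin n) ≠ L := by
        rw [Fin.ne_iff_vne]; simp [hLdef]; omega
      rw [hpred, hmdef]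
      simp only [if_neg hneL]
      rw [hq, hq]
      have hc2 : ((n - 1 - ((j:ℕ) - 1) : ℕ) : ℝ) = ((n - 1 - (j:ℕ) : ℕ) : ℝ) + 1 := by
        have : (n - 1 - ((j:ℕ) - 1) : ℕ) = (n - 1 - (j:ℕ)) + 1 := by omega
        rw [this]; push_cast; ring
      simp only [Fin.val_mk] at hc2 ⊢
      rw [hc2]
      ring
  -- Assemble the Riccati equation
  have hDARE : P = Q + Aᵀ * (P - P * B * (Bᵀ * P * B + R)⁻¹ * Bᵀ * P) * A := by
    rw [hM, hAMA, hP, hQ]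
    ext i j
    by_cases h : i = j
    · subst h
      simp [Matrix.diagonal_apply, Matrix.one_apply, hrec i]
    · simp [Matrix.diagonal_apply, Matrix.one_apply, h]
  -- Final bounds on q 0
  have hq0 : q ⟨0, hn⟩ = δ + qn / (qn + 1) := by
    have hpred : predIdx n hn ⟨0, hn⟩ = L := by
      rw [Fin.ext_iff]; simp [predIdx, hLdef]
    rw [hrec ⟨0, hn⟩, hpred, hmL]
  have hfr0 : 0 < qn / (qn + 1) := by positivity
  have hfr1 : qn / (qn + 1) < 1 := by
    rw [div_lt_one (by linarith)]; linarith
  refine ⟨?_, hDARE, hgt, ?_, ?_⟩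
  · rw [hP]; exact Matrix.PosDef.diagonal hqpos
  · rw [hq0]; linarith
  · rw [hq0]; linarith
end

section
/- Let n ≥ 1, δ > 0, T ≥ 1, and let q_n ∈ ℝ satisfy nδ < q_n < nδ + 1. Let M ∈ ℝ^{T×T} be the symmetric tridiagonal matrix whose diagonal entries are all δn + 2 except the (T,T)-entry which is q_n + 1, and whose sub- and super-diagonal entries are all −1 (all other entries zero). Let ρ ∈ (0,1) be the root of ρ² − (δn+2)ρ + 1 = 0 with ρ < 1, i.e. ρ = ((δn+2) − √((δn+2)² − 4))/2. Then M is invertible and its inverse satisfies (M^{−1})_{t, t+τ} ≥ ((1−ρ)/(δn+2)) · ρ^τ for all indices with 1 ≤ t ≤ t + τ ≤ T. (Equivalently, ρ = (√ζ − 1)/(√ζ + 1) where ζ = (δn+4)/(δn).) -/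
open Matrix Finset

section aux
variable (ρ u A b γ : ℝ)

lemma aux_I1 (hu : ρ * u = 1) (hA : A = ρ + u) (t : ℕ) :
    A * (u ^ (t + 2) - ρ ^ (t + 2)) =
      (u ^ (t + 1) - ρ ^ (t + 1)) + (u ^ (t + 3) - ρ ^ (t + 3)) := by
  linear_combination (u ^ (t + 2) - ρ ^ (t + 2)) * hA + (u ^ (t + 1) - ρ ^ (t + 1)) * hu

lemma aux_I2 (hA : A = ρ + u) : A * (u ^ 1 - ρ ^ 1) = u ^ 2 - ρ ^ 2 := by
  linear_combination (u - ρ) * hA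

lemma aux_I3 (hu : ρ * u = 1) (hA : A = ρ + u) (t : ℕ) :
    A * (ρ ^ (t + 1) - γ * u ^ (t + 1)) =
      (ρ ^ t - γ * u ^ t) + (ρ ^ (t + 2) - γ * u ^ (t + 2)) := by
  linear_combination (ρ ^ (t + 1) - γ * u ^ (t + 1)) * hA + (ρ ^ t - γ * u ^ t) * hu

lemma aux_I4 (hu : ρ * u = 1) (k : ℕ) (hP2 : u ^ (k + 2) * ρ ^ (k + 2) = 1)
    (hγk : γ * (b - ρ) = u * ρ ^ (2 * k + 2) * (b * ρ - 1)) :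
    b * (ρ ^ (k + 1) - γ * u ^ (k + 1)) = ρ ^ k - γ * u ^ k := by
  linear_combination (-(u ^ (k + 1))) * hγk + (-(γ * u ^ k)) * hu + (-(b * ρ - 1)) * ρ ^ k * hP2

lemma aux_I5 (t : ℕ) (hPt : u ^ t * ρ ^ t = 1) (hPt1 : u ^ (t + 1) * ρ ^ (t + 1) = 1)
    (hP2 : u ^ 2 * ρ ^ 2 = 1) :
    (u ^ (t + 2) - ρ ^ (t + 2)) * (ρ ^ t - γ * u ^ t) -
      (u ^ (t + 1) - ρ ^ (t + 1)) * (ρ ^ (t + 1) - γ * u ^ (t + 1)) =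
      (1 - ρ ^ 2) * (u ^ 2 - γ) := by
  linear_combination (u ^ 2 + γ * ρ ^ 2) * hPt - (1 + γ) * hPt1 + hP2

lemma aux_I4' (hu : ρ * u = 1) (hγ : γ * (b - ρ) = u * (b * ρ - 1)) :
    b * ((u - ρ) * (1 - γ)) = (1 - ρ ^ 2) * (u ^ 2 - γ) := by
  linear_combination (ρ - u) * hγ + (ρ * u + b * ρ - b * u - γ) * hu

lemma aux_key2 (hu : ρ * u = 1) (hA : A = ρ + u) (hρ0 : 0 < ρ) (hρ1 : ρ < 1)
    (hu1 : 1 < u) (hbA : b < A) :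
    (1 - ρ) * (u ^ 2 * (b - ρ)) ≤ u * ((u - ρ) * A) := by
  have hu0 : 0 < u := lt_trans one_pos hu1
  have h1 : 0 ≤ (1 - ρ) * u ^ 2 * (u - (b - ρ)) :=
    mul_nonneg (mul_nonneg (by linarith) (sq_nonneg u)) (by rw [hA] at hbA; linarith)
  have h2 : 0 < u * ρ * (u ^ 2 - ρ) :=
    mul_pos (mul_pos hu0 hρ0) (by nlinarith [hu1])
  rw [hA]
  nlinarith [h1, h2]

lemma aux_t1' (hu : ρ * u = 1) (hA : A = ρ + u) (hρ0 : 0 < ρ) (hu1 : 1 < u) :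
    (1 - ρ) * u ^ 2 ≤ u * A := by
  have hu0 : 0 < u := lt_trans one_pos hu1
  have h3 : u * A = u * ρ + u ^ 2 := by rw [hA]; ring
  nlinarith [mul_pos hρ0 hu0, mul_pos (mul_pos hρ0 hu0) hu0, h3]

end aux

lemma sum3 {T : ℕ} (i : Fin T) (f : Fin T → ℝ)
    (hz : ∀ j : Fin T, j ≠ i → (j : ℕ) + 1 ≠ (i : ℕ) → (i : ℕ) + 1 ≠ (j : ℕ) → f j = 0) :
    ∑ j, f j =
      (if h : 0 < (i : ℕ) then f ⟨(i : ℕ) - 1, lt_of_le_of_lt (Nat.sub_le _ _) i.isLt⟩ else 0)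
        + f i +
      (if h : (i : ℕ) + 1 < T then f ⟨(i : ℕ) + 1, h⟩ else 0) := by
  classical
  have key : ∀ j : Fin T, f j =
      (if (j : ℕ) + 1 = (i : ℕ) then f j else 0) + (if j = i then f j else 0) +
      (if (i : ℕ) + 1 = (j : ℕ) then f j else 0) := by
    intro j
    by_cases h1 : j = i
    · subst h1
      rw [if_pos rfl, if_neg (show ¬((j : ℕ) + 1 = (j : ℕ)) by omega)]
      ring
    · rw [if_neg h1]
      by_cases h2 : (j : ℕ) + 1 = (i : ℕ)
      · rw [if_pos h2, if_neg (show ¬((i : ℕ) + 1 = (j : ℕ)) by omega)]; ring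
      · rw [if_neg h2]
        by_cases h3 : (i : ℕ) + 1 = (j : ℕ)
        · rw [if_pos h3]; ring
        · rw [if_neg h3, hz j h1 h2 h3]; ring
  rw [Finset.sum_congr rfl (fun j _ => key j), Finset.sum_add_distrib,
    Finset.sum_add_distrib]
  congr 1
  · congr 1
    · by_cases h0 : 0 < (i : ℕ)
      · rw [dif_pos h0]
        rw [Finset.sum_eq_single_of_mem
            (⟨(i : ℕ) - 1, lt_of_le_of_lt (Nat.sub_le _ _) i.isLt⟩ : Fin T)
            (mem_univ _)]
        · rw [if_pos (show (i : ℕ) - 1 + 1 = (i : ℕ) by omega)]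
        · intro j _ hj
          refine if_neg (fun h => hj (Fin.ext ?_))
          show (j : ℕ) = (i : ℕ) - 1
          omega
      · rw [dif_neg h0]
        apply Finset.sum_eq_zero
        intro j _
        rw [if_neg (by omega)]
    · exact Finset.sum_ite_eq' _ _ _ |>.trans (by rw [if_pos (mem_univ i)])
  · by_cases hT' : (i : ℕ) + 1 < T
    · rw [dif_pos hT']
      rw [Finset.sum_eq_single_of_mem (⟨(i : ℕ) + 1, hT'⟩ : Fin T) (mem_univ _)]
      · rw [if_pos rfl]
      · intro j _ hj
        refine if_neg (fun h => hj (Fin.ext ?_))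
        show (j : ℕ) = (i : ℕ) + 1
        omega
    · rw [dif_neg hT']
      apply Finset.sum_eq_zero
      intro j _
      have := j.isLt
      rw [if_neg (by omega)]

set_option maxHeartbeats 1600000 in
/-- Lemma "`H` and `H⁻¹` properties": the symmetric tridiagonal matrix `M` with diagonal
`δn+2` (last entry `q_n+1`, where `nδ < q_n < nδ+1`) and off-diagonal `−1` is invertible
and its inverse has entries decaying geometrically away from the diagonal:
`(M⁻¹)_{t,t+τ} ≥ ((1−ρ)/(δn+2)) ρ^τ` where `ρ` is the root of `ρ² − (δn+2)ρ + 1 = 0`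
with `ρ < 1`. -/
theorem stmt_4 (n T : ℕ) (hn : 1 ≤ n) (hT : 1 ≤ T) (δ : ℝ) (hδ : 0 < δ)
    (qn : ℝ) (hqn1 : (n : ℝ) * δ < qn) (hqn2 : qn < (n : ℝ) * δ + 1)
    (M : Matrix (Fin T) (Fin T) ℝ)
    (hMdiag : ∀ i : Fin T, M i i = if (i : ℕ) = T - 1 then qn + 1 else δ * n + 2)
    (hMoff : ∀ i j : Fin T, (i : ℕ) + 1 = (j : ℕ) ∨ (j : ℕ) + 1 = (i : ℕ) → M i j = -1)
    (hMzero : ∀ i j : Fin T, i ≠ j →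
      (i : ℕ) + 1 ≠ (j : ℕ) → (j : ℕ) + 1 ≠ (i : ℕ) → M i j = 0)
    (ρ : ℝ) (hρ : ρ = ((δ * n + 2) - Real.sqrt ((δ * n + 2) ^ 2 - 4)) / 2) :
    0 < ρ ∧ ρ < 1 ∧ IsUnit M.det ∧
      ∀ t s : Fin T, t ≤ s →
        ((1 - ρ) / (δ * n + 2)) * ρ ^ ((s : ℕ) - (t : ℕ)) ≤ M⁻¹ t s := by
  have hn1 : (1 : ℝ) ≤ (n : ℝ) := by exact_mod_cast hn
  set A : ℝ := δ * n + 2 with hAdef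
  have hA2 : 2 < A := by rw [hAdef]; nlinarith
  have hA0 : 0 < A := by linarith
  have hsq : Real.sqrt (A ^ 2 - 4) ^ 2 = A ^ 2 - 4 := Real.sq_sqrt (by nlinarith)
  have hsq0 : 0 ≤ Real.sqrt (A ^ 2 - 4) := Real.sqrt_nonneg _
  have hρ0 : 0 < ρ := by
    rw [hρ]
    have h1 : Real.sqrt (A ^ 2 - 4) < A := by nlinarith [hsq, hsq0]
    linarith
  have hρ1 : ρ < 1 := by
    rw [hρ]
    have h1 : A - 2 < Real.sqrt (A ^ 2 - 4) := by nlinarith [hsq, hsq0]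
    linarith
  have h2ρ : Real.sqrt (A ^ 2 - 4) = A - 2 * ρ := by rw [hρ]; ring
  have h3 : (A - 2 * ρ) ^ 2 = A ^ 2 - 4 := by rw [← h2ρ]; exact hsq
  have hquad : ρ ^ 2 + 1 = A * ρ := by linear_combination h3 / 4
  set u : ℝ := ρ⁻¹ with hudef
  have hu0 : 0 < u := by rw [hudef]; exact inv_pos.mpr hρ0
  have hu : ρ * u = 1 := mul_inv_cancel₀ (ne_of_gt hρ0)
  have hA : A = ρ + u := by
    have h1 : A * ρ = (ρ + u) * ρ := by
      rw [add_mul]; nlinarith [hquad, hu]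
    exact mul_right_cancel₀ (ne_of_gt hρ0) h1
  have hu1 : 1 < u := by nlinarith [hu]
  have hup : ∀ m : ℕ, u ^ m * ρ ^ m = 1 := by
    intro m; rw [← mul_pow, mul_comm u ρ, hu, one_pow]
  set b : ℝ := qn + 1 with hbdef
  have hb1 : A - 1 < b := by rw [hAdef, hbdef]; nlinarith
  have hb2 : b < A := by rw [hAdef, hbdef]; nlinarith
  have hb0 : (1:ℝ) < b := lt_trans (by linarith : (1:ℝ) < A - 1) hb1
  have hbρ0 : 0 < b - ρ := by linarith [hb1, hA2, hρ1]
  set γ : ℝ := u * ρ ^ (2 * (T - 1)) * (b * ρ - 1) / (b - ρ) with hγdef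
  have hγb : γ * (b - ρ) = u * ρ ^ (2 * (T - 1)) * (b * ρ - 1) := by
    rw [hγdef]; field_simp
  have hγu2 : γ < u ^ 2 := by
    rcases le_or_gt (b * ρ) 1 with h | h
    · have h1 : γ * (b - ρ) ≤ 0 := by
        rw [hγb]
        have hp := pow_pos hρ0 (2 * (T - 1))
        nlinarith [mul_nonneg (mul_pos hu0 hp).le (by linarith : (0:ℝ) ≤ 1 - b * ρ)]
      nlinarith [mul_pos (mul_pos hu0 hu0) hbρ0]
    · have hp1 : ρ ^ (2 * (T - 1)) ≤ 1 := pow_le_one₀ hρ0.le hρ1.le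
      have hρu : ρ < u := lt_trans hρ1 hu1
      have key : γ * (b - ρ) < u ^ 2 * (b - ρ) := by
        rw [hγb]
        have e : u * (b * ρ - 1) < u ^ 2 * (b - ρ) := by
          nlinarith [mul_pos hu0 (mul_pos (lt_trans one_pos hb0 : (0:ℝ) < b) (sub_pos.mpr hρu))]
        have ha : 0 ≤ u * (b * ρ - 1) := mul_nonneg hu0.le (by linarith)
        have hb' := mul_le_mul_of_nonneg_left hp1 ha
        linarith [hb', e]
      exact lt_of_mul_lt_mul_right (by linarith [key]) hbρ0.le
  set w : ℝ := (1 - ρ ^ 2) * (u ^ 2 - γ) with hwdef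
  have h1ρ2 : 0 < 1 - ρ ^ 2 := by nlinarith
  have hw0 : 0 < w := by rw [hwdef]; nlinarith
  have hwne : w ≠ 0 := ne_of_gt hw0
  have hww : w / w = 1 := div_self hwne
  set φ : ℕ → ℝ := fun t => u ^ (t + 1) - ρ ^ (t + 1) with hφdef
  set ψ : ℕ → ℝ := fun t => ρ ^ t - γ * u ^ t with hψdef
  have hI1 : ∀ t : ℕ, A * φ (t + 1) = φ t + φ (t + 2) := by
    intro t; simp only [hφdef]; exact aux_I1 ρ u A hu hA t
  have hI2 : A * φ 0 = φ 1 := by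
    simp only [hφdef]; exact aux_I2 ρ u A hA
  have hI3 : ∀ t : ℕ, A * ψ (t + 1) = ψ t + ψ (t + 2) := by
    intro t; simp only [hψdef]; exact aux_I3 ρ u A γ hu hA t
  have hI4 : ∀ k : ℕ, T = k + 2 → b * ψ (k + 1) = ψ k := by
    intro k hk
    simp only [hψdef]
    apply aux_I4 ρ u b γ hu k (hup (k + 2))
    have h2 : 2 * (T - 1) = 2 * k + 2 := by omega
    rw [← h2]; exact hγb
  have hI5 : ∀ t : ℕ, φ (t + 1) * ψ t - φ t * ψ (t + 1) = w := by
    intro t; simp only [hφdef, hψdef, hwdef]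
    exact aux_I5 ρ u γ t (hup t) (hup (t + 1)) (hup 2)
  have hI4' : T = 1 → b * (φ 0 * ψ 0) = w := by
    intro h1
    have h2 : 2 * (T - 1) = 0 := by omega
    have hγ1 : γ * (b - ρ) = u * (b * ρ - 1) := by
      have := hγb; rw [h2, pow_zero, mul_one] at this; exact this
    simp only [hφdef, hψdef, hwdef, pow_zero, pow_one, mul_one]
    linear_combination aux_I4' ρ u b γ hu hγ1
  set N : Matrix (Fin T) (Fin T) ℝ :=
    Matrix.of (fun t s : Fin T => if (t : ℕ) ≤ (s : ℕ) then φ t * ψ s / w else φ s * ψ t / w)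
    with hNdef
  have hNle : ∀ t s : Fin T, (t : ℕ) ≤ (s : ℕ) → N t s = φ (t : ℕ) * ψ (s : ℕ) / w := by
    intro t s h; simp only [hNdef, Matrix.of_apply, if_pos h]
  have hNge : ∀ t s : Fin T, (s : ℕ) ≤ (t : ℕ) → N t s = φ (s : ℕ) * ψ (t : ℕ) / w := by
    intro t s h
    simp only [hNdef, Matrix.of_apply]
    by_cases h' : (t : ℕ) ≤ (s : ℕ)
    · have he : (t : ℕ) = (s : ℕ) := le_antisymm h' h
      rw [if_pos h', he]
    · rw [if_neg h']
  have hMN : M * N = 1 := by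
    ext i s
    rw [Matrix.mul_apply]
    rw [sum3 i (fun j => M i j * N j s)
      (by intro j h1 h2 h3; show M i j * N j s = 0; rw [hMzero i j (Ne.symm h1) h3 h2, zero_mul])]
    beta_reduce
    rw [Matrix.one_apply]
    rcases lt_trichotomy (i : ℕ) (s : ℕ) with hlt | heq | hgt
    · -- i < s : result 0
      have hne : ¬(i = s) := by intro h; rw [h] at hlt; exact lt_irrefl _ hlt
      rw [if_neg hne]
      have hsT := s.isLt
      have hiT : (i : ℕ) + 1 < T := by omega
      rw [dif_pos hiT]
      have hd : M i i = A := by rw [hMdiag i, if_neg (by omega)]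
      have hup1 : M i ⟨(i : ℕ) + 1, hiT⟩ = -1 := hMoff i _ (Or.inl rfl)
      have hNi : N i s = φ (i : ℕ) * ψ (s : ℕ) / w := hNle i s (by omega)
      have hNi1 : N ⟨(i : ℕ) + 1, hiT⟩ s = φ ((i : ℕ) + 1) * ψ (s : ℕ) / w :=
        hNle _ s (by show (i : ℕ) + 1 ≤ (s : ℕ); omega)
      by_cases h0 : 0 < (i : ℕ)
      · rw [dif_pos h0]
        have hdown : M i ⟨(i : ℕ) - 1, lt_of_le_of_lt (Nat.sub_le _ _) i.isLt⟩ = -1 :=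
          hMoff i _ (Or.inr (show (i : ℕ) - 1 + 1 = (i : ℕ) by omega))
        have hNd : N ⟨(i : ℕ) - 1, lt_of_le_of_lt (Nat.sub_le _ _) i.isLt⟩ s
            = φ ((i : ℕ) - 1) * ψ (s : ℕ) / w :=
          hNle _ s (by show (i : ℕ) - 1 ≤ (s : ℕ); omega)
        rw [hdown, hd, hup1, hNd, hNi, hNi1]
        obtain ⟨k, hk⟩ : ∃ k, (i : ℕ) = k + 1 := ⟨(i : ℕ) - 1, by omega⟩
        rw [hk, show k + 1 - 1 = k from by omega]
        have h1 := hI1 k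
        linear_combination (ψ (s : ℕ) / w) * h1
      · rw [dif_neg h0]
        rw [hd, hup1, hNi, hNi1, show (i : ℕ) = 0 from by omega]
        have h2 := hI2
        linear_combination (ψ (s : ℕ) / w) * h2
    · -- i = s : result 1
      have he : i = s := Fin.ext heq
      rw [if_pos he]
      subst he
      by_cases hiT : (i : ℕ) + 1 < T
      · rw [dif_pos hiT]
        have hd : M i i = A := by rw [hMdiag i, if_neg (by omega)]
        have hup1 : M i ⟨(i : ℕ) + 1, hiT⟩ = -1 := hMoff i _ (Or.inl rfl)
        have hNi : N i i = φ (i : ℕ) * ψ (i : ℕ) / w := hNle i i le_rfl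
        have hNi1 : N ⟨(i : ℕ) + 1, hiT⟩ i = φ (i : ℕ) * ψ ((i : ℕ) + 1) / w :=
          hNge _ i (by show (i : ℕ) ≤ (i : ℕ) + 1; omega)
        by_cases h0 : 0 < (i : ℕ)
        · rw [dif_pos h0]
          have hdown : M i ⟨(i : ℕ) - 1, lt_of_le_of_lt (Nat.sub_le _ _) i.isLt⟩ = -1 :=
            hMoff i _ (Or.inr (show (i : ℕ) - 1 + 1 = (i : ℕ) by omega))
          have hNd : N ⟨(i : ℕ) - 1, lt_of_le_of_lt (Nat.sub_le _ _) i.isLt⟩ i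
              = φ ((i : ℕ) - 1) * ψ (i : ℕ) / w :=
            hNle _ i (by show (i : ℕ) - 1 ≤ (i : ℕ); omega)
          rw [hdown, hd, hup1, hNd, hNi, hNi1]
          obtain ⟨k, hk⟩ : ∃ k, (i : ℕ) = k + 1 := ⟨(i : ℕ) - 1, by omega⟩
          rw [hk, show k + 1 - 1 = k from by omega]
          have h1 := hI1 k
          have h5 := hI5 (k + 1)
          linear_combination (ψ (k + 1) / w) * h1 + (1 / w) * h5 + hww
        · rw [dif_neg h0]
          rw [hd, hup1, hNi, hNi1, show (i : ℕ) = 0 from by omega]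
          have h2 := hI2
          have h5 := hI5 0
          linear_combination (ψ 0 / w) * h2 + (1 / w) * h5 + hww
      · rw [dif_neg hiT]
        have hlast : (i : ℕ) = T - 1 := by have := i.isLt; omega
        have hd : M i i = b := by rw [hMdiag i, if_pos hlast]
        have hNi : N i i = φ (i : ℕ) * ψ (i : ℕ) / w := hNle i i le_rfl
        by_cases h0 : 0 < (i : ℕ)
        · rw [dif_pos h0]
          have hdown : M i ⟨(i : ℕ) - 1, lt_of_le_of_lt (Nat.sub_le _ _) i.isLt⟩ = -1 :=
            hMoff i _ (Or.inr (show (i : ℕ) - 1 + 1 = (i : ℕ) by omega))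
          have hNd : N ⟨(i : ℕ) - 1, lt_of_le_of_lt (Nat.sub_le _ _) i.isLt⟩ i
              = φ ((i : ℕ) - 1) * ψ (i : ℕ) / w :=
            hNle _ i (by show (i : ℕ) - 1 ≤ (i : ℕ); omega)
          rw [hdown, hd, hNd, hNi]
          obtain ⟨k, hk⟩ : ∃ k, T = k + 2 := ⟨T - 2, by have := i.isLt; omega⟩
          have hik : (i : ℕ) = k + 1 := by have := i.isLt; omega
          rw [hik, show k + 1 - 1 = k from by omega]
          have h4 := hI4 k hk
          have h5 := hI5 k
          linear_combination (φ (k + 1) / w) * h4 + (1 / w) * h5 + hww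
        · rw [dif_neg h0]
          have hT1 : T = 1 := by have := i.isLt; omega
          rw [hd, hNi, show (i : ℕ) = 0 from by omega]
          have h := hI4' hT1
          linear_combination (1 / w) * h + hww
    · -- s < i : result 0
      have hne : ¬(i = s) := by intro h; rw [h] at hgt; exact lt_irrefl _ hgt
      rw [if_neg hne]
      have h0 : 0 < (i : ℕ) := by omega
      rw [dif_pos h0]
      have hdown : M i ⟨(i : ℕ) - 1, lt_of_le_of_lt (Nat.sub_le _ _) i.isLt⟩ = -1 :=
        hMoff i _ (Or.inr (show (i : ℕ) - 1 + 1 = (i : ℕ) by omega))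
      have hNd : N ⟨(i : ℕ) - 1, lt_of_le_of_lt (Nat.sub_le _ _) i.isLt⟩ s
          = φ (s : ℕ) * ψ ((i : ℕ) - 1) / w :=
        hNge _ s (by show (s : ℕ) ≤ (i : ℕ) - 1; omega)
      have hNi : N i s = φ (s : ℕ) * ψ (i : ℕ) / w := hNge i s (by omega)
      by_cases hiT : (i : ℕ) + 1 < T
      · rw [dif_pos hiT]
        have hd : M i i = A := by rw [hMdiag i, if_neg (by omega)]
        have hup1 : M i ⟨(i : ℕ) + 1, hiT⟩ = -1 := hMoff i _ (Or.inl rfl)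
        have hNu : N ⟨(i : ℕ) + 1, hiT⟩ s = φ (s : ℕ) * ψ ((i : ℕ) + 1) / w :=
          hNge _ s (by show (s : ℕ) ≤ (i : ℕ) + 1; omega)
        rw [hdown, hd, hup1, hNd, hNi, hNu]
        obtain ⟨k, hk⟩ : ∃ k, (i : ℕ) = k + 1 := ⟨(i : ℕ) - 1, by omega⟩
        rw [hk, show k + 1 - 1 = k from by omega]
        have h3 := hI3 k
        linear_combination (φ (s : ℕ) / w) * h3
      · rw [dif_neg hiT]
        have hlast : (i : ℕ) = T - 1 := by have := i.isLt; omega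
        have hd : M i i = b := by rw [hMdiag i, if_pos hlast]
        rw [hdown, hd, hNd, hNi]
        obtain ⟨k, hk⟩ : ∃ k, T = k + 2 := ⟨T - 2, by have := i.isLt; omega⟩
        have hik : (i : ℕ) = k + 1 := by have := i.isLt; omega
        rw [hik, show k + 1 - 1 = k from by omega]
        have h4 := hI4 k hk
        linear_combination (φ (s : ℕ) / w) * h4
  refine ⟨hρ0, hρ1, Matrix.isUnit_det_of_right_inverse hMN, ?_⟩
  intro t s hts
  have hts' : (t : ℕ) ≤ (s : ℕ) := hts
  rw [Matrix.inv_eq_right_inv hMN, hNle t s hts']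
  set tv := (t : ℕ) with htvdef
  set sv := (s : ℕ) with hsvdef
  have hsT : sv ≤ T - 1 := by have := s.isLt; omega
  rw [le_div_iff₀ hw0, div_mul_eq_mul_div, div_mul_eq_mul_div, div_le_iff₀ hA0]
  have hφlb : (1 - ρ ^ 2) * u ^ (tv + 1) ≤ φ tv := by
    have h1 : ρ ^ (2 * tv + 2) ≤ ρ ^ 2 :=
      pow_le_pow_of_le_one hρ0.le hρ1.le (by omega)
    have h2 : ρ ^ (2 * tv + 2) = ρ ^ (tv + 1) * ρ ^ (tv + 1) := by
      rw [← pow_add]; congr 1; omega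
    have h3 : ρ ^ (tv + 1) * ρ ^ (tv + 1) * u ^ (tv + 1) ≤ ρ ^ 2 * u ^ (tv + 1) :=
      mul_le_mul_of_nonneg_right (h2 ▸ h1) (pow_pos hu0 (tv + 1)).le
    have h5 : ρ ^ (tv + 1) * ρ ^ (tv + 1) * u ^ (tv + 1) = ρ ^ (tv + 1) := by
      linear_combination ρ ^ (tv + 1) * hup (tv + 1)
    show (1 - ρ ^ 2) * u ^ (tv + 1) ≤ u ^ (tv + 1) - ρ ^ (tv + 1)
    linarith [h3, h5]
  have hφpos : 0 < φ tv := lt_of_lt_of_le (mul_pos h1ρ2 (pow_pos hu0 _)) hφlb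
  have hψeq : ψ sv = ρ ^ sv * (1 - γ * u ^ (2 * sv)) := by
    show ρ ^ sv - γ * u ^ sv = _
    linear_combination γ * u ^ sv * hup sv
  have hρst : ρ ^ tv * ρ ^ (sv - tv) = ρ ^ sv := by rw [← pow_add]; congr 1; omega
  have hx : u ^ (tv + 1) * ρ ^ sv = u * ρ ^ (sv - tv) := by
    rw [← hρst]; linear_combination u * ρ ^ (sv - tv) * hup tv
  rcases le_or_gt γ 0 with hγ0 | hγ0
  · -- γ ≤ 0
    have hψpos : 0 < ψ sv := by
      show 0 < ρ ^ sv - γ * u ^ sv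
      have := mul_nonneg (neg_nonneg.mpr hγ0) (pow_pos hu0 sv).le
      linarith [pow_pos hρ0 sv]
    have step1 : (1 - ρ ^ 2) * u ^ (tv + 1) * (ψ sv * A) ≤ φ tv * (ψ sv * A) :=
      mul_le_mul_of_nonneg_right hφlb (mul_nonneg hψpos.le hA0.le)
    have hψexp : u ^ (tv + 1) * ψ sv = u * ρ ^ (sv - tv) - γ * (u ^ (tv + 1) * u ^ sv) := by
      show u ^ (tv + 1) * (ρ ^ sv - γ * u ^ sv) = _
      linear_combination hx
    have t1' : (1 - ρ) * u ^ 2 ≤ u * A := aux_t1' ρ u A hu hA hρ0 hu1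
    have t1 : (1 - ρ) * ρ ^ (sv - tv) * u ^ 2 ≤ u * ρ ^ (sv - tv) * A := by
      have := mul_le_mul_of_nonneg_left t1' (pow_nonneg hρ0.le (sv - tv))
      linarith [this]
    have t2 : (1 - ρ) * ρ ^ (sv - tv) * (-γ) ≤ (-γ) * (u ^ (tv + 1) * u ^ sv) * A := by
      have hr1 : (1 - ρ) * ρ ^ (sv - tv) ≤ 1 := by
        have h6 := pow_le_one₀ hρ0.le hρ1.le (n := sv - tv)
        have h7 := pow_nonneg hρ0.le (sv - tv)
        calc (1 - ρ) * ρ ^ (sv - tv) ≤ 1 * ρ ^ (sv - tv) :=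
              mul_le_mul_of_nonneg_right (by linarith) h7
          _ = ρ ^ (sv - tv) := one_mul _
          _ ≤ 1 := h6
      have hr2 : (1 : ℝ) ≤ u ^ (tv + 1) * u ^ sv * A := by
        have e1 : (1:ℝ) ≤ u ^ (tv + 1) := one_le_pow₀ hu1.le
        have e2 : (1:ℝ) ≤ u ^ sv := one_le_pow₀ hu1.le
        have h12 : (1:ℝ) ≤ u ^ (tv + 1) * u ^ sv := by
          calc (1:ℝ) = 1 * 1 := by norm_num
            _ ≤ u ^ (tv + 1) * u ^ sv := mul_le_mul e1 e2 zero_le_one (by linarith)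
        calc (1:ℝ) = 1 * 1 := by norm_num
          _ ≤ (u ^ (tv + 1) * u ^ sv) * A := mul_le_mul h12 (by linarith) zero_le_one
              (by linarith)
      have := mul_le_mul_of_nonneg_left (le_trans hr1 hr2) (neg_nonneg.mpr hγ0)
      linarith [this]
    have key : (1 - ρ) * ρ ^ (sv - tv) * (u ^ 2 - γ) ≤
        (u * ρ ^ (sv - tv) - γ * (u ^ (tv + 1) * u ^ sv)) * A := by
      linarith [t1, t2]
    calc (1 - ρ) * ρ ^ (sv - tv) * w
        = (1 - ρ ^ 2) * ((1 - ρ) * ρ ^ (sv - tv) * (u ^ 2 - γ)) := by rw [hwdef]; ring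
      _ ≤ (1 - ρ ^ 2) * ((u * ρ ^ (sv - tv) - γ * (u ^ (tv + 1) * u ^ sv)) * A) :=
          mul_le_mul_of_nonneg_left key h1ρ2.le
      _ = (1 - ρ ^ 2) * u ^ (tv + 1) * (ψ sv * A) := by
          linear_combination (-((1 - ρ ^ 2) * A)) * hψexp
      _ ≤ φ tv * (ψ sv * A) := step1
      _ = φ tv * ψ sv * A := by ring
  · -- γ > 0
    have hp1 : ρ ^ (2 * (T - 1)) ≤ 1 := pow_le_one₀ hρ0.le hρ1.le
    have e1 : γ * u ^ (2 * (T - 1)) * (b - ρ) = u * (b * ρ - 1) := by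
      linear_combination u ^ (2 * (T - 1)) * hγb + u * (b * ρ - 1) * hup (2 * (T - 1))
    have e2 : γ * u ^ (2 * sv) ≤ γ * u ^ (2 * (T - 1)) :=
      mul_le_mul_of_nonneg_left (pow_le_pow_right₀ hu1.le (by omega)) hγ0.le
    have e3 : u * (b * ρ - 1) = b - u := by linear_combination b * hu
    have h1' : u - ρ ≤ (1 - γ * u ^ (2 * sv)) * (b - ρ) := by
      have e4 := mul_le_mul_of_nonneg_right e2 hbρ0.le
      linarith [e4, e1, e3]
    have hψlb : ρ ^ sv * (u - ρ) ≤ ψ sv * (b - ρ) := by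
      rw [hψeq]
      have := mul_le_mul_of_nonneg_left h1' (pow_nonneg hρ0.le sv)
      linarith [this]
    have huρ : ρ < u := lt_trans hρ1 hu1
    have hψpos : 0 < ψ sv := by
      have h5 : 0 < ρ ^ sv * (u - ρ) := mul_pos (pow_pos hρ0 sv) (by linarith)
      rcases le_or_gt (ψ sv) 0 with hh | hh
      · exfalso
        have h6 := mul_le_mul_of_nonneg_right hh hbρ0.le
        rw [zero_mul] at h6
        linarith [hψlb, h5]
      · exact hh
    rw [← mul_le_mul_iff_of_pos_right hbρ0]
    have key2 : (1 - ρ) * (u ^ 2 * (b - ρ)) ≤ u * ((u - ρ) * A) :=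
      aux_key2 ρ u A b hu hA hρ0 hρ1 hu1 hb2
    calc (1 - ρ) * ρ ^ (sv - tv) * w * (b - ρ)
        ≤ (1 - ρ) * ρ ^ (sv - tv) * ((1 - ρ ^ 2) * u ^ 2) * (b - ρ) := by
          have hwle : w ≤ (1 - ρ ^ 2) * u ^ 2 := by
            rw [hwdef]
            exact mul_le_mul_of_nonneg_left (by linarith) h1ρ2.le
          have hc : 0 ≤ (1 - ρ) * ρ ^ (sv - tv) :=
            mul_nonneg (by linarith) (pow_nonneg hρ0.le _)
          have := mul_le_mul_of_nonneg_right
            (mul_le_mul_of_nonneg_left hwle hc) hbρ0.le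
          linarith [this]
      _ = (1 - ρ ^ 2) * ρ ^ (sv - tv) * ((1 - ρ) * (u ^ 2 * (b - ρ))) := by ring
      _ ≤ (1 - ρ ^ 2) * ρ ^ (sv - tv) * (u * ((u - ρ) * A)) :=
          mul_le_mul_of_nonneg_left key2 (mul_nonneg h1ρ2.le (pow_nonneg hρ0.le _))
      _ = ((1 - ρ ^ 2) * u ^ (tv + 1)) * (ρ ^ sv * (u - ρ)) * A := by
          linear_combination (-((1 - ρ ^ 2) * (u - ρ) * A)) * hx
      _ ≤ (φ tv * (ψ sv * (b - ρ))) * A := by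
          have hmm := mul_le_mul hφlb hψlb
            (mul_nonneg (pow_nonneg hρ0.le sv) (by linarith)) hφpos.le
          have := mul_le_mul_of_nonneg_right hmm hA0.le
          linarith [this]
      _ = φ tv * ψ sv * A * (b - ρ) := by ring
end

section
/- Let A ∈ ℝ^{n×n} have spectral radius strictly less than 1 (all eigenvalues of modulus < 1), let (A_t)_{t≥0} be a sequence of n×n matrices with A_t → A (in operator norm), and let η ∈ ℝ^n. Let x^s be the unique vector with x^s = A x^s + η (which exists since I − A is invertible). Then for every initial vector x_0 ∈ ℝ^n, the sequence defined by x_{t+1} = A_t x_t + η converges to x^s. -/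
open Matrix Filter

attribute [local instance] Matrix.linftyOpNormedAddCommGroup Matrix.linftyOpNormedRing
  Matrix.linftyOpNormedAlgebra

private lemma aux_schur {n : ℕ} [NeZero n] (A : Matrix (Fin n) (Fin n) ℝ)
    (hA : ∀ μ ∈ spectrum ℂ (A.map (algebraMap ℝ ℂ)), ‖μ‖ < 1) :
    ∃ m : ℕ, 1 ≤ m ∧ ‖A ^ m‖ < 1 := by
  set A' := A.map (algebraMap ℝ ℂ) with hA'
  haveI : CompleteSpace (Matrix (Fin n) (Fin n) ℂ) := FiniteDimensional.complete ℂ _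
  have hρ : spectralRadius ℂ A' < 1 := by
    have := spectrum.spectralRadius_lt_of_forall_lt A' (r := 1) ?_
    · simpa using this
    · intro z hz
      have := hA z hz
      simpa [← NNReal.coe_lt_coe, coe_nnnorm] using this
  have hG := spectrum.pow_nnnorm_pow_one_div_tendsto_nhds_spectralRadius A'
  have hev : ∀ᶠ k : ℕ in atTop, ((‖A' ^ k‖₊ : ENNReal) ^ (1 / (k : ℝ))) < 1 :=
    hG.eventually_lt_const hρ
  obtain ⟨m, hm1, hm⟩ := (hev.and (eventually_ge_atTop 1)).exists
  refine ⟨m, hm, ?_⟩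
  have hlt : (‖A' ^ m‖₊ : ENNReal) < 1 := by
    by_contra h
    push_neg at h
    have h2 : (1 : ENNReal) ≤ (‖A' ^ m‖₊ : ENNReal) ^ (1 / (m : ℝ)) :=
      ENNReal.one_le_rpow h (by positivity)
    exact absurd hm1 (not_lt.mpr h2)
  have hpowmap : A' ^ m = (A ^ m).map (algebraMap ℝ ℂ) := by
    rw [hA', ← RingHom.mapMatrix_apply, ← RingHom.mapMatrix_apply, map_pow]
  have hmap : ‖A' ^ m‖₊ = ‖A ^ m‖₊ := by
    rw [hpowmap, Matrix.linfty_opNNNorm_def, Matrix.linfty_opNNNorm_def]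
    congr 1; funext i
    congr 1; funext j
    simp [Matrix.map_apply, Complex.nnnorm_real]
  rw [hmap] at hlt
  have := ENNReal.coe_lt_coe.mp (by simpa using hlt)
  simpa [← NNReal.coe_lt_coe, coe_nnnorm] using this

private lemma aux_rec (u d : ℕ → ℝ) (hu : ∀ t, 0 ≤ u t) (s : ℝ) (hs0 : 0 ≤ s) (hs1 : s < 1)
    (T : ℕ) (hrec : ∀ t, T ≤ t → u (t + 1) ≤ s * u t + d t)
    (hd : Tendsto d atTop (nhds 0)) : Tendsto u atTop (nhds 0) := by
  rw [Metric.tendsto_atTop] at hd ⊢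
  intro ε hε
  have hε4 : 0 < (1 - s) * (ε / 4) := by
    have : 0 < 1 - s := by linarith
    positivity
  obtain ⟨T1', hT1'⟩ := hd _ hε4
  set T1 := max T T1' with hT1def
  have hdsmall : ∀ t, T1 ≤ t → d t ≤ (1 - s) * (ε / 4) := by
    intro t ht
    have := hT1' t (le_trans (le_max_right _ _) ht)
    rw [Real.dist_eq, sub_zero] at this
    exact le_of_lt (lt_of_le_of_lt (le_abs_self _) this)
  have key : ∀ k : ℕ, u (T1 + k) ≤ s ^ k * u T1 + ε / 4 := by
    intro k
    induction k with
    | zero => simp; nlinarith [hu T1]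
    | succ k ih =>
      have h1 : u (T1 + k + 1) ≤ s * u (T1 + k) + d (T1 + k) :=
        hrec _ (le_trans (le_max_left _ _) (Nat.le_add_right _ _))
      have h2 : d (T1 + k) ≤ (1 - s) * (ε / 4) := hdsmall _ (Nat.le_add_right _ _)
      have h3 : s * u (T1 + k) ≤ s * (s ^ k * u T1 + ε / 4) :=
        mul_le_mul_of_nonneg_left ih hs0
      have heq : u (T1 + (k + 1)) = u (T1 + k + 1) := by ring_nf
      rw [heq]
      have h4 : s * (s ^ k * u T1 + ε / 4) = s ^ (k + 1) * u T1 + s * (ε / 4) := by ring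
      have h5 : s * (ε / 4) ≤ ε / 4 := by nlinarith
      linarith
  have hpow : Tendsto (fun k : ℕ => s ^ k * u T1) atTop (nhds 0) := by
    simpa using (tendsto_pow_atTop_nhds_zero_of_lt_one hs0 hs1).mul_const (u T1)
  rw [Metric.tendsto_atTop] at hpow
  obtain ⟨k0, hk0⟩ := hpow (ε / 4) (by positivity)
  refine ⟨T1 + k0, fun t ht => ?_⟩
  have h1 : u t ≤ s ^ (t - T1) * u T1 + ε / 4 := by
    have := key (t - T1)
    rwa [Nat.add_sub_cancel' (le_trans (Nat.le_add_right _ _) ht)] at this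
  have h2 : s ^ (t - T1) ≤ s ^ k0 := by
    apply pow_le_pow_of_le_one hs0 (le_of_lt hs1)
    omega
  have h3 : s ^ k0 * u T1 < ε / 4 := by
    have := hk0 k0 le_rfl
    rw [Real.dist_eq, sub_zero] at this
    exact lt_of_le_of_lt (le_abs_self _) this
  rw [Real.dist_eq, sub_zero, abs_of_nonneg (hu t)]
  have h4 : s ^ (t - T1) * u T1 ≤ s ^ k0 * u T1 :=
    mul_le_mul_of_nonneg_right h2 (hu T1)
  linarith

/-- Appendix-D Claim: if `A` is Schur stable (all complex eigenvalues of modulus `< 1`),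
`A_t → A`, and `x^s` is the fixed point `x^s = A x^s + η`, then the trajectory of
`x_{t+1} = A_t x_t + η` converges to `x^s` from any initial point. -/
theorem stmt_5 {n : ℕ} (A : Matrix (Fin n) (Fin n) ℝ)
    (hA : ∀ μ ∈ spectrum ℂ (A.map (algebraMap ℝ ℂ)), ‖μ‖ < 1)
    (At : ℕ → Matrix (Fin n) (Fin n) ℝ)
    (hAt : Filter.Tendsto At Filter.atTop (nhds A))
    (η : Fin n → ℝ)
    (xs : Fin n → ℝ) (hxs : xs = A.mulVec xs + η)
    (x : ℕ → Fin n → ℝ) (x0 : Fin n → ℝ) (hx0 : x 0 = x0)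
    (hx : ∀ t : ℕ, x (t + 1) = (At t).mulVec (x t) + η) :
    Filter.Tendsto x Filter.atTop (nhds xs) := by
  rcases Nat.eq_zero_or_pos n with hn | hn
  · subst hn
    have hxx : x = fun _ => xs := funext fun t => Subsingleton.elim _ _
    rw [hxx]
    exact tendsto_const_nhds
  haveI : NeZero n := ⟨by omega⟩
  obtain ⟨m, hm1, hcnorm⟩ := aux_schur A hA
  obtain ⟨c, hcdef⟩ : ∃ c : ℝ, c = ‖A ^ m‖ := ⟨_, rfl⟩
  have hc : c < 1 := by rw [hcdef]; exact hcnorm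
  have hc0 : 0 ≤ c := by rw [hcdef]; exact norm_nonneg _
  obtain ⟨K, hKdef⟩ : ∃ K : ℝ, K = ∑ k ∈ Finset.range m, ‖A ^ k‖ := ⟨_, rfl⟩
  have hK1 : 1 ≤ K := by
    have h0 : ‖A ^ 0‖ = 1 := by
      rw [pow_zero, ← Matrix.diagonal_one, Matrix.linfty_opNorm_diagonal]
      simp
    calc (1 : ℝ) = ‖A ^ 0‖ := h0.symm
      _ ≤ K := hKdef ▸ Finset.single_le_sum (f := fun k => ‖A ^ k‖)
          (fun k _ => norm_nonneg _) (Finset.mem_range.mpr (by omega))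
  have hKpos : 0 < K := lt_of_lt_of_le one_pos hK1
  set ν : (Fin n → ℝ) → ℝ := fun v => ∑ k ∈ Finset.range m, ‖(A ^ k).mulVec v‖ with hνdef
  have hν0 : ∀ v, 0 ≤ ν v := fun v => Finset.sum_nonneg fun k _ => norm_nonneg _
  have hν1 : ∀ v, ‖v‖ ≤ ν v := by
    intro v
    have := Finset.single_le_sum (f := fun k => ‖(A ^ k).mulVec v‖)
      (fun k _ => norm_nonneg _) (Finset.mem_range.mpr (show 0 < m by omega))
    simpa [Matrix.one_mulVec] using this
  have hν2 : ∀ v, ν v ≤ K * ‖v‖ := by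
    intro v
    rw [hνdef, hKdef, Finset.sum_mul]
    exact Finset.sum_le_sum fun k _ => Matrix.linfty_opNorm_mulVec _ _
  obtain ⟨s, hsdef⟩ : ∃ s : ℝ, s = 1 - (1 - c) / K := ⟨_, rfl⟩
  have hs0 : 0 ≤ s := by
    rw [hsdef, sub_nonneg, div_le_one hKpos]
    linarith
  have hs1 : s < 1 := by
    rw [hsdef]
    have : 0 < (1 - c) / K := div_pos (by linarith) hKpos
    linarith
  have hν3 : ∀ v, ν (A.mulVec v) ≤ s * ν v := by
    intro v
    have e0 : ∀ k : ℕ, (A ^ k).mulVec (A.mulVec v) = (A ^ (k + 1)).mulVec v := by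
      intro k
      rw [Matrix.mulVec_mulVec, ← pow_succ]
    have e1 : ν (A.mulVec v) = ∑ k ∈ Finset.range m, ‖(A ^ (k + 1)).mulVec v‖ := by
      rw [hνdef]
      exact Finset.sum_congr rfl fun k _ => by rw [e0]
    have e2 : ∑ k ∈ Finset.range (m + 1), ‖(A ^ k).mulVec v‖
        = (∑ k ∈ Finset.range m, ‖(A ^ (k + 1)).mulVec v‖) + ‖(A ^ 0).mulVec v‖ :=
      Finset.sum_range_succ' _ m
    have e3 : ∑ k ∈ Finset.range (m + 1), ‖(A ^ k).mulVec v‖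
        = ν v + ‖(A ^ m).mulVec v‖ := Finset.sum_range_succ _ m
    have e4 : ‖(A ^ 0).mulVec v‖ = ‖v‖ := by simp [Matrix.one_mulVec]
    have e5 : ν (A.mulVec v) = ν v + ‖(A ^ m).mulVec v‖ - ‖v‖ := by
      rw [e1]; rw [e2, e4] at e3; linarith
    have e6 : ‖(A ^ m).mulVec v‖ ≤ c * ‖v‖ := by
      rw [hcdef]; exact Matrix.linfty_opNorm_mulVec _ _
    have e7 : (1 - c) / K * ν v ≤ (1 - c) * ‖v‖ := by
      rw [div_mul_eq_mul_div, div_le_iff₀ hKpos]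
      have := hν2 v
      nlinarith
    have : s * ν v = ν v - (1 - c) / K * ν v := by rw [hsdef]; ring
    rw [this]
    linarith
  have hν4 : ∀ u v, ν (u + v) ≤ ν u + ν v := by
    intro u v
    rw [hνdef, ← Finset.sum_add_distrib]
    refine Finset.sum_le_sum fun k _ => ?_
    rw [Matrix.mulVec_add]
    exact norm_add_le _ _
  have hν5 : ∀ (B : Matrix (Fin n) (Fin n) ℝ) v, ν (B.mulVec v) ≤ K * (‖B‖ * ‖v‖) := by
    intro B v
    calc ν (B.mulVec v) ≤ K * ‖B.mulVec v‖ := hν2 _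
      _ ≤ K * (‖B‖ * ‖v‖) := by
          have := Matrix.linfty_opNorm_mulVec B v
          nlinarith
  -- error dynamics
  have hxs' : A.mulVec xs = xs - η := by
    rw [eq_sub_iff_add_eq, ← hxs]
  have hyrec : ∀ t, x (t + 1) - xs
      = (At t).mulVec (x t - xs) + (At t - A).mulVec xs := by
    intro t
    rw [hx t, Matrix.mulVec_sub, Matrix.sub_mulVec, hxs']
    abel
  -- δ → 0
  have hδ : Tendsto (fun t => ‖At t - A‖) atTop (nhds 0) := by
    rw [← tendsto_iff_norm_sub_tendsto_zero]
    exact hAt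
  -- pick T such that K * δ t ≤ (1 - s) / 2
  have hε0 : (0 : ℝ) < (1 - s) / (2 * K) := by
    apply div_pos (by linarith) (by linarith)
  rw [Metric.tendsto_atTop] at hδ
  obtain ⟨T, hT⟩ := hδ _ hε0
  have hδsmall : ∀ t, T ≤ t → K * ‖At t - A‖ ≤ (1 - s) / 2 := by
    intro t ht
    have := hT t ht
    rw [Real.dist_eq, sub_zero] at this
    have h1 : ‖At t - A‖ ≤ (1 - s) / (2 * K) := le_of_lt (lt_of_le_of_lt (le_abs_self _) this)
    calc K * ‖At t - A‖ ≤ K * ((1 - s) / (2 * K)) :=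
          mul_le_mul_of_nonneg_left h1 hKpos.le
      _ = (1 - s) / 2 := by field_simp
  obtain ⟨s', hs'def⟩ : ∃ s' : ℝ, s' = (1 + s) / 2 := ⟨_, rfl⟩
  have hs'0 : 0 ≤ s' := by rw [hs'def]; linarith
  have hs'1 : s' < 1 := by rw [hs'def]; linarith
  -- the recursion for ν (x t - xs)
  have hrec : ∀ t, T ≤ t → ν (x (t + 1) - xs)
      ≤ s' * ν (x t - xs) + K * (‖At t - A‖ * ‖xs‖) := by
    intro t ht
    rw [hyrec t]
    have hsplit : (At t).mulVec (x t - xs)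
        = A.mulVec (x t - xs) + (At t - A).mulVec (x t - xs) := by
      rw [Matrix.sub_mulVec]; abel
    calc ν ((At t).mulVec (x t - xs) + (At t - A).mulVec xs)
        ≤ ν ((At t).mulVec (x t - xs)) + ν ((At t - A).mulVec xs) := hν4 _ _
      _ ≤ ν (A.mulVec (x t - xs)) + ν ((At t - A).mulVec (x t - xs))
            + ν ((At t - A).mulVec xs) := by
          rw [hsplit]
          have := hν4 (A.mulVec (x t - xs)) ((At t - A).mulVec (x t - xs))
          linarith
      _ ≤ s * ν (x t - xs) + K * (‖At t - A‖ * ‖x t - xs‖)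
            + K * (‖At t - A‖ * ‖xs‖) := by
          have h1 := hν3 (x t - xs)
          have h2 := hν5 (At t - A) (x t - xs)
          have h3 := hν5 (At t - A) xs
          linarith
      _ ≤ s' * ν (x t - xs) + K * (‖At t - A‖ * ‖xs‖) := by
          have h1 : K * (‖At t - A‖ * ‖x t - xs‖) ≤ (1 - s) / 2 * ν (x t - xs) := by
            have h2 := hδsmall t ht
            have h3 := hν1 (x t - xs)
            have h4 : (0:ℝ) ≤ ‖x t - xs‖ := norm_nonneg _
            have h5 := hν0 (x t - xs)
            nlinarith [norm_nonneg (At t - A)]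
          have : s' = s + (1 - s) / 2 := by rw [hs'def]; ring
          nlinarith [hν0 (x t - xs)]
  -- d → 0
  have hdtend : Tendsto (fun t => K * (‖At t - A‖ * ‖xs‖)) atTop (nhds 0) := by
    rw [Metric.tendsto_atTop]
    intro ε hε
    obtain ⟨N, hN⟩ := hδ (ε / (K * (‖xs‖ + 1))) (by positivity)
    refine ⟨N, fun t ht => ?_⟩
    have h1 := hN t ht
    rw [Real.dist_eq, sub_zero] at h1 ⊢
    have h2 : ‖At t - A‖ < ε / (K * (‖xs‖ + 1)) := lt_of_le_of_lt (le_abs_self _) h1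
    have h3 : (0:ℝ) < K * (‖xs‖ + 1) := by positivity
    rw [div_eq_mul_inv] at h2
    have h4 : 0 ≤ K * (‖At t - A‖ * ‖xs‖) := by positivity
    rw [abs_of_nonneg h4]
    have h5 : ‖At t - A‖ * (K * (‖xs‖ + 1)) < ε := by
      rw [← lt_div_iff₀ h3, div_eq_mul_inv]
      exact h2
    nlinarith [norm_nonneg (At t - A), norm_nonneg xs]
  -- apply the recursion lemma
  have hνtend : Tendsto (fun t => ν (x t - xs)) atTop (nhds 0) :=
    aux_rec _ _ (fun t => hν0 _) s' hs'0 hs'1 T hrec hdtend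
  -- squeeze: ‖x t - xs‖ → 0
  have hnorm : Tendsto (fun t => ‖x t - xs‖) atTop (nhds 0) :=
    squeeze_zero (fun t => norm_nonneg _) (fun t => hν1 _) hνtend
  have : Tendsto (fun t => x t - xs) atTop (nhds 0) :=
    tendsto_zero_iff_norm_tendsto_zero.mpr hnorm
  have h := this.add_const xs
  simpa using h
end

section
/- Let A ∈ ℝ^{n×n}, B ∈ ℝ^{n×m}, let Q ∈ ℝ^{n×n} and R ∈ ℝ^{m×m} be symmetric positive definite, and let θ ∈ ℝ^n. Suppose P ∈ ℝ^{n×n} is a symmetric positive-definite solution of the discrete-time algebraic Riccati equation P = Q + Aᵀ(P − PB(R + BᵀPB)^{−1}BᵀP)A. Define M = P − PB(R + BᵀPB)^{−1}BᵀP, H = M − MA(Q + AᵀMA)^{−1}AᵀM, K = (R + BᵀPB)^{−1}BᵀPA, K' = (R + BᵀPB)^{−1}BᵀP. Assume I_n − (A − BK)ᵀ is invertible, and set α = (I_n − (A − BK)ᵀ)^{−1}Qθ and β = P^{−1}α. Let λ = (1/2)(Aθ − β)ᵀH(Aθ − β) and h(x) = (1/2)(x − β)ᵀP(x − β). Then for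 every x ∈ ℝ^n, the function u ↦ (1/2)(x − θ)ᵀQ(x − θ) + (1/2)uᵀRu + h(Ax + Bu) attains its minimum over u ∈ ℝ^m at u* = −Kx + K'β, and the minimum value equals λ + h(x); i.e., h and λ solve the Bellman equation h(x) + λ = min_u [(1/2)(x − θ)ᵀQ(x − θ) + (1/2)uᵀRu + h(Ax + Bu)] for all x. -/
open Matrix


private lemma dot_symm' {n : ℕ} {N : Matrix (Fin n) (Fin n) ℝ} (hN : Nᵀ = N)
    (x y : Fin n → ℝ) : x ⬝ᵥ N *ᵥ y = y ⬝ᵥ N *ᵥ x := by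
  rw [dotProduct_mulVec, ← mulVec_transpose, hN, dotProduct_comm]

private lemma mulVec_dot' {k l : ℕ} (A : Matrix (Fin k) (Fin l) ℝ) (x : Fin l → ℝ)
    (y : Fin k → ℝ) : (A *ᵥ x) ⬝ᵥ y = x ⬝ᵥ (Aᵀ *ᵥ y) := by
  rw [dotProduct_comm, dotProduct_mulVec, ← mulVec_transpose, dotProduct_comm]


/-- Verification part of Proposition 1: the quadratic bias function
`h(x) = ½(x−β)ᵀP(x−β)` and constant `λ = ½(Aθ−β)ᵀH(Aθ−β)` solve the average-cost Bellman
equation for the LQ tracking stage cost, the minimizing control being `u* = −Kx + K'β`. -/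
theorem stmt_8 {n m : ℕ}
    (A : Matrix (Fin n) (Fin n) ℝ) (B : Matrix (Fin n) (Fin m) ℝ)
    (Q P M H : Matrix (Fin n) (Fin n) ℝ) (R : Matrix (Fin m) (Fin m) ℝ)
    (K K' : Matrix (Fin m) (Fin n) ℝ)
    (θ α β : Fin n → ℝ) (lam : ℝ) (h : (Fin n → ℝ) → ℝ)
    (hQ : Q.PosDef) (hR : R.PosDef) (hP : P.PosDef)
    (hDARE : P = Q + Aᵀ * (P - P * B * (R + Bᵀ * P * B)⁻¹ * Bᵀ * P) * A)
    (hM : M = P - P * B * (R + Bᵀ * P * B)⁻¹ * Bᵀ * P)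
    (hH : H = M - M * A * (Q + Aᵀ * M * A)⁻¹ * Aᵀ * M)
    (hK : K = (R + Bᵀ * P * B)⁻¹ * Bᵀ * P * A)
    (hK' : K' = (R + Bᵀ * P * B)⁻¹ * Bᵀ * P)
    (hinv : IsUnit (1 - (A - B * K)ᵀ))
    (hα : α = (1 - (A - B * K)ᵀ)⁻¹.mulVec (Q.mulVec θ))
    (hβ : β = P⁻¹.mulVec α)
    (hlam : lam = (1 / 2) * ((A.mulVec θ - β) ⬝ᵥ H.mulVec (A.mulVec θ - β)))
    (hh : ∀ x : Fin n → ℝ, h x = (1 / 2) * ((x - β) ⬝ᵥ P.mulVec (x - β))) :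
    ∀ x : Fin n → ℝ,
      (∀ u : Fin m → ℝ,
        (1 / 2) * ((x - θ) ⬝ᵥ Q.mulVec (x - θ))
            + (1 / 2) * ((-(K.mulVec x) + K'.mulVec β) ⬝ᵥ
                R.mulVec (-(K.mulVec x) + K'.mulVec β))
            + h (A.mulVec x + B.mulVec (-(K.mulVec x) + K'.mulVec β))
          ≤ (1 / 2) * ((x - θ) ⬝ᵥ Q.mulVec (x - θ)) + (1 / 2) * (u ⬝ᵥ R.mulVec u)
            + h (A.mulVec x + B.mulVec u)) ∧
      (1 / 2) * ((x - θ) ⬝ᵥ Q.mulVec (x - θ))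
          + (1 / 2) * ((-(K.mulVec x) + K'.mulVec β) ⬝ᵥ
              R.mulVec (-(K.mulVec x) + K'.mulVec β))
          + h (A.mulVec x + B.mulVec (-(K.mulVec x) + K'.mulVec β))
        = lam + h x := by
  have hQt : Qᵀ = Q := by rw [← conjTranspose_eq_transpose_of_trivial]; exact hQ.1
  have hRt : Rᵀ = R := by rw [← conjTranspose_eq_transpose_of_trivial]; exact hR.1
  have hPt : Pᵀ = P := by rw [← conjTranspose_eq_transpose_of_trivial]; exact hP.1
  set S : Matrix (Fin m) (Fin m) ℝ := R + Bᵀ * P * B with hS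
  have hSpd : S.PosDef := by
    refine hR.add_posSemidef ?_
    simpa [conjTranspose_eq_transpose_of_trivial, Matrix.mul_assoc] using
      hP.posSemidef.conjTranspose_mul_mul_same B
  have hSt : Sᵀ = S := by
    rw [← conjTranspose_eq_transpose_of_trivial]; exact hSpd.1
  have hSdet : IsUnit S.det := (isUnit_iff_isUnit_det _).mp hSpd.isUnit
  have hPdet : IsUnit P.det := (isUnit_iff_isUnit_det _).mp hP.isUnit
  have hSSinv : S * S⁻¹ = 1 := Matrix.mul_nonsing_inv _ hSdet
  have hPPinv : P * P⁻¹ = 1 := Matrix.mul_nonsing_inv _ hPdet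
  have hPinvP : P⁻¹ * P = 1 := Matrix.nonsing_inv_mul _ hPdet
  have hSinvT : (S⁻¹)ᵀ = S⁻¹ := by rw [transpose_nonsing_inv, hSt]
  have hMt : Mᵀ = M := by
    rw [hM]
    simp [transpose_sub, transpose_mul, transpose_transpose, hPt, hSinvT, Matrix.mul_assoc]
  have hMQ : Q + Aᵀ * M * A = P := by rw [hM]; exact hDARE.symm
  have hAM : Aᵀ * M = (A - B * K)ᵀ * P := by
    rw [hM, hK]
    simp only [transpose_sub, transpose_mul, transpose_transpose, hPt, hSinvT,
      Matrix.sub_mul, Matrix.mul_sub, Matrix.mul_assoc]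
  have hPβ : P *ᵥ β = α := by
    rw [hβ, mulVec_mulVec, hPPinv, one_mulVec]
  have hα2 : α - (A - B * K)ᵀ *ᵥ α = Q *ᵥ θ := by
    have h1 : (1 - (A - B * K)ᵀ) *ᵥ α = Q *ᵥ θ := by
      rw [hα, mulVec_mulVec, Matrix.mul_nonsing_inv _ ((isUnit_iff_isUnit_det _).mp hinv),
        one_mulVec]
    rw [sub_mulVec, one_mulVec] at h1
    exact h1
  have hkey : (Aᵀ * M) *ᵥ β = P *ᵥ β - Q *ᵥ θ := by
    rw [hAM, ← mulVec_mulVec, hPβ, ← hα2]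
    abel
  have hH2 : H = M - M * A * P⁻¹ * Aᵀ * M := by rw [hH, hMQ]
  intro x
  set v : Fin n → ℝ := A *ᵥ x - β with hv
  set d : Fin n → ℝ := A *ᵥ θ - β with hd
  have hAMA : ∀ y : Fin n → ℝ, (Aᵀ * M) *ᵥ (A *ᵥ y) = P *ᵥ y - Q *ᵥ y := by
    intro y
    have e : Aᵀ * M * A = P - Q := by rw [← hMQ]; abel
    rw [mulVec_mulVec, e, sub_mulVec]
  have hw : (Aᵀ * M) *ᵥ d = P *ᵥ (θ - β) := by
    rw [hd, mulVec_sub, hAMA, hkey, mulVec_sub]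
    abel
  have hlam2 : 2 * lam = d ⬝ᵥ M *ᵥ d - (θ - β) ⬝ᵥ P *ᵥ (θ - β) := by
    have h1 : (M * A * P⁻¹ * Aᵀ * M) *ᵥ d = (M * A * P⁻¹) *ᵥ ((Aᵀ * M) *ᵥ d) := by
      simp only [mulVec_mulVec, Matrix.mul_assoc]
    have h2 : (M * A * P⁻¹) *ᵥ (P *ᵥ (θ - β)) = (M * A) *ᵥ (θ - β) := by
      simp only [mulVec_mulVec, Matrix.mul_assoc, hPinvP, Matrix.mul_one]
    have e1 : H *ᵥ d = M *ᵥ d - (M * A) *ᵥ (θ - β) := by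
      rw [hH2, sub_mulVec, h1, hw, h2]
    have e2 : d ⬝ᵥ (M * A) *ᵥ (θ - β) = (θ - β) ⬝ᵥ P *ᵥ (θ - β) := by
      calc d ⬝ᵥ (M * A) *ᵥ (θ - β) = ((M * A) *ᵥ (θ - β)) ⬝ᵥ d := by rw [dotProduct_comm]
        _ = (θ - β) ⬝ᵥ ((M * A)ᵀ *ᵥ d) := by rw [mulVec_dot']
        _ = (θ - β) ⬝ᵥ ((Aᵀ * M) *ᵥ d) := by rw [transpose_mul, hMt]
        _ = (θ - β) ⬝ᵥ P *ᵥ (θ - β) := by rw [hw]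
    rw [hlam, e1, dotProduct_sub, e2]
    ring
  have hconst : θ ⬝ᵥ Q *ᵥ θ + β ⬝ᵥ M *ᵥ β - β ⬝ᵥ P *ᵥ β = 2 * lam := by
    have e1 : d ⬝ᵥ M *ᵥ d = (A *ᵥ θ) ⬝ᵥ M *ᵥ (A *ᵥ θ)
        - 2 * ((A *ᵥ θ) ⬝ᵥ M *ᵥ β) + β ⬝ᵥ M *ᵥ β := by
      have hsym := dot_symm' hMt (A *ᵥ θ) β
      rw [hd]
      simp only [mulVec_sub, dotProduct_sub, sub_dotProduct]
      linarith
    have e2 : (A *ᵥ θ) ⬝ᵥ M *ᵥ (A *ᵥ θ) = θ ⬝ᵥ P *ᵥ θ - θ ⬝ᵥ Q *ᵥ θ := by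
      rw [mulVec_dot', mulVec_mulVec, hAMA, dotProduct_sub]
    have e3 : (A *ᵥ θ) ⬝ᵥ M *ᵥ β = θ ⬝ᵥ P *ᵥ β - θ ⬝ᵥ Q *ᵥ θ := by
      rw [mulVec_dot', mulVec_mulVec, hkey, dotProduct_sub]
    have e4 : (θ - β) ⬝ᵥ P *ᵥ (θ - β)
        = θ ⬝ᵥ P *ᵥ θ - 2 * (θ ⬝ᵥ P *ᵥ β) + β ⬝ᵥ P *ᵥ β := by
      have hsym := dot_symm' hPt θ β
      simp only [mulVec_sub, dotProduct_sub, sub_dotProduct]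
      linarith
    have h5 := hlam2
    rw [e1, e2, e3, e4] at h5
    linarith
  have hSK : S * K = Bᵀ * P * A := by
    rw [hK]
    calc S * (S⁻¹ * Bᵀ * P * A) = (S * S⁻¹) * Bᵀ * P * A := by
          simp only [Matrix.mul_assoc]
      _ = Bᵀ * P * A := by rw [hSSinv, Matrix.one_mul]
  have hSK' : S * K' = Bᵀ * P := by
    rw [hK']
    calc S * (S⁻¹ * Bᵀ * P) = (S * S⁻¹) * Bᵀ * P := by
          simp only [Matrix.mul_assoc]
      _ = Bᵀ * P := by rw [hSSinv, Matrix.one_mul]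
  set ustar : Fin m → ℝ := -(K *ᵥ x) + K' *ᵥ β with hustar
  have hSu : S *ᵥ ustar = -((Bᵀ * P) *ᵥ v) := by
    rw [hustar, hv]
    simp only [mulVec_add, mulVec_neg, mulVec_sub, mulVec_mulVec, hSK, hSK']
    abel
  have hPv : ∀ u : Fin m → ℝ,
      (A *ᵥ x + B *ᵥ u - β) ⬝ᵥ P *ᵥ (A *ᵥ x + B *ᵥ u - β)
      = v ⬝ᵥ P *ᵥ v + 2 * (u ⬝ᵥ ((Bᵀ * P) *ᵥ v)) + u ⬝ᵥ (Bᵀ * P * B) *ᵥ u := by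
    intro u
    have hrw : A *ᵥ x + B *ᵥ u - β = v + B *ᵥ u := by rw [hv]; abel
    rw [hrw]
    have hsym : v ⬝ᵥ P *ᵥ (B *ᵥ u) = (B *ᵥ u) ⬝ᵥ P *ᵥ v := dot_symm' hPt v (B *ᵥ u)
    have h1 : (B *ᵥ u) ⬝ᵥ P *ᵥ v = u ⬝ᵥ ((Bᵀ * P) *ᵥ v) := by
      rw [mulVec_dot', mulVec_mulVec]
    have h2 : (B *ᵥ u) ⬝ᵥ P *ᵥ (B *ᵥ u) = u ⬝ᵥ (Bᵀ * P * B) *ᵥ u := by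
      rw [mulVec_dot', mulVec_mulVec, mulVec_mulVec, Matrix.mul_assoc]
    simp only [mulVec_add, dotProduct_add, add_dotProduct]
    linarith
  have hcost : ∀ u : Fin m → ℝ,
      (1 / 2) * (u ⬝ᵥ R *ᵥ u) + h (A *ᵥ x + B *ᵥ u)
      = (1 / 2) * (v ⬝ᵥ P *ᵥ v) + (1 / 2) * (u ⬝ᵥ S *ᵥ u) - u ⬝ᵥ (S *ᵥ ustar) := by
    intro u
    rw [hh, hSu, hPv u]
    have hSsplit : u ⬝ᵥ S *ᵥ u = u ⬝ᵥ R *ᵥ u + u ⬝ᵥ (Bᵀ * P * B) *ᵥ u := by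
      rw [hS, add_mulVec, dotProduct_add]
    rw [dotProduct_neg, hSsplit]
    ring
  have hcostu : (1 / 2) * (ustar ⬝ᵥ R *ᵥ ustar) + h (A *ᵥ x + B *ᵥ ustar)
      = (1 / 2) * (v ⬝ᵥ P *ᵥ v) - (1 / 2) * (ustar ⬝ᵥ S *ᵥ ustar) := by
    rw [hcost ustar]; ring
  have hineq : ∀ u : Fin m → ℝ,
      (1 / 2) * (ustar ⬝ᵥ R *ᵥ ustar) + h (A *ᵥ x + B *ᵥ ustar)
      ≤ (1 / 2) * (u ⬝ᵥ R *ᵥ u) + h (A *ᵥ x + B *ᵥ u) := by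
    intro u
    rw [hcost u, hcostu]
    have hq : 0 ≤ (u - ustar) ⬝ᵥ S *ᵥ (u - ustar) := by
      have := hSpd.posSemidef.dotProduct_mulVec_nonneg (u - ustar)
      simpa using this
    have hsym : u ⬝ᵥ S *ᵥ ustar = ustar ⬝ᵥ S *ᵥ u := dot_symm' hSt u ustar
    simp only [mulVec_sub, dotProduct_sub, sub_dotProduct] at hq
    linarith
  have huSu : ustar ⬝ᵥ S *ᵥ ustar = v ⬝ᵥ P *ᵥ v - v ⬝ᵥ M *ᵥ v := by
    have hu2 : ustar = -((S⁻¹ * Bᵀ * P) *ᵥ v) := by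
      rw [hustar, hK, hK', hv]
      simp only [mulVec_sub, mulVec_mulVec, Matrix.mul_assoc]
      abel
    have hmat : (S⁻¹ * Bᵀ * P)ᵀ * (Bᵀ * P) = P * B * S⁻¹ * Bᵀ * P := by
      simp only [transpose_mul, transpose_transpose, hPt, hSinvT, Matrix.mul_assoc]
    calc ustar ⬝ᵥ S *ᵥ ustar = ((S⁻¹ * Bᵀ * P) *ᵥ v) ⬝ᵥ ((Bᵀ * P) *ᵥ v) := by
          rw [hSu, hu2, dotProduct_neg, neg_dotProduct, neg_neg]
      _ = v ⬝ᵥ ((P * B * S⁻¹ * Bᵀ * P) *ᵥ v) := by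
          rw [mulVec_dot', mulVec_mulVec, hmat]
      _ = v ⬝ᵥ P *ᵥ v - v ⬝ᵥ M *ᵥ v := by
          rw [hM, sub_mulVec, dotProduct_sub]
          abel
  have eQ : (x - θ) ⬝ᵥ Q *ᵥ (x - θ)
      = x ⬝ᵥ Q *ᵥ x - 2 * (x ⬝ᵥ Q *ᵥ θ) + θ ⬝ᵥ Q *ᵥ θ := by
    have hsym := dot_symm' hQt x θ
    simp only [mulVec_sub, dotProduct_sub, sub_dotProduct]
    linarith
  have eP : (x - β) ⬝ᵥ P *ᵥ (x - β)
      = x ⬝ᵥ P *ᵥ x - 2 * (x ⬝ᵥ P *ᵥ β) + β ⬝ᵥ P *ᵥ β := by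
    have hsym := dot_symm' hPt x β
    simp only [mulVec_sub, dotProduct_sub, sub_dotProduct]
    linarith
  have eM : v ⬝ᵥ M *ᵥ v = (x ⬝ᵥ P *ᵥ x - x ⬝ᵥ Q *ᵥ x)
      - 2 * (x ⬝ᵥ P *ᵥ β - x ⬝ᵥ Q *ᵥ θ) + β ⬝ᵥ M *ᵥ β := by
    have e1 : v ⬝ᵥ M *ᵥ v = (A *ᵥ x) ⬝ᵥ M *ᵥ (A *ᵥ x)
        - 2 * ((A *ᵥ x) ⬝ᵥ M *ᵥ β) + β ⬝ᵥ M *ᵥ β := by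
      have hsym := dot_symm' hMt (A *ᵥ x) β
      rw [hv]
      simp only [mulVec_sub, dotProduct_sub, sub_dotProduct]
      linarith
    have e2 : (A *ᵥ x) ⬝ᵥ M *ᵥ (A *ᵥ x) = x ⬝ᵥ P *ᵥ x - x ⬝ᵥ Q *ᵥ x := by
      rw [mulVec_dot', mulVec_mulVec, hAMA, dotProduct_sub]
    have e3 : (A *ᵥ x) ⬝ᵥ M *ᵥ β = x ⬝ᵥ P *ᵥ β - x ⬝ᵥ Q *ᵥ θ := by
      rw [mulVec_dot', mulVec_mulVec, hkey, dotProduct_sub]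
    rw [e1, e2, e3]
  have hval : (1 / 2) * ((x - θ) ⬝ᵥ Q *ᵥ (x - θ))
      + (1 / 2) * (ustar ⬝ᵥ R *ᵥ ustar) + h (A *ᵥ x + B *ᵥ ustar) = lam + h x := by
    rw [add_assoc, hcostu, hh, huSu, eQ, eP]
    linarith [hconst, eM]
  exact ⟨fun u => by linarith [hineq u], hval⟩
end

section
/- Let A ∈ ℝ^{n×n}, B ∈ ℝ^{n×m}, N ≥ 1, and for 0 ≤ t ≤ N let Q_t ∈ ℝ^{n×n} be symmetric positive definite, θ_t ∈ ℝ^n, and for 0 ≤ t ≤ N−1 let R_t ∈ ℝ^{m×m} be symmetric positive definite. Define backward: P_N = Q_N, β_N = θ_N; and for t = N−1 down to 0: M_t = P_{t+1} − P_{t+1}B(R_t + BᵀP_{t+1}B)^{−1}BᵀP_{t+1}, P_t = Q_t + AᵀM_tA, β_t = P_t^{−1}(Q_tθ_t + AᵀM_tβ_{t+1}), H_t = M_t − M_tA·P_t^{−1}·AᵀM_t, K_t = (R_t + BᵀP_{t+1}B)^{−1}BᵀP_{t+1}A, K'_t = (R_t + BᵀP_{t+1}B)^{−1}BᵀP_{t+1}.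 Define value functions backward by V_N(x) = (1/2)(x − θ_N)ᵀQ_N(x − θ_N) and V_t(x) = inf_{u ∈ ℝ^m} [(1/2)(x − θ_t)ᵀQ_t(x − θ_t) + (1/2)uᵀR_t u + V_{t+1}(Ax + Bu)]. Then each P_t is symmetric positive definite (so the recursion is well defined), the infimum defining V_t(x) is attained at u*_t = −K_t x + K'_t β_{t+1}, and for all 0 ≤ t ≤ N and all x ∈ ℝ^n, V_t(x) = (1/2)(x − β_t)ᵀP_t(x − β_t) + (1/2)Σ_{k=t}^{N−1}(Aθ_k − β_{k+1})ᵀH_k(Aθ_k − β_{k+1}). -/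
open Matrix

section helpers
variable {p q : Type*} [Fintype p] [Fintype q]

lemma dpA (A : Matrix p q ℝ) (x : q → ℝ) (r : p → ℝ) :
    (A *ᵥ x) ⬝ᵥ r = x ⬝ᵥ (Aᵀ *ᵥ r) := by
  rw [Matrix.dotProduct_mulVec, Matrix.vecMul_transpose]

lemma symdp {M : Matrix p p ℝ} (h : Mᵀ = M) (x y : p → ℝ) :
    x ⬝ᵥ (M *ᵥ y) = y ⬝ᵥ (M *ᵥ x) := by
  rw [dotProduct_comm, dpA, h]

omit [Fintype p] [Fintype q] in
lemma conjT_eq (A : Matrix p q ℝ) : Aᴴ = Aᵀ := by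
  ext i j; simp [Matrix.conjTranspose_apply]

omit [Fintype q] in
lemma symm_of_pd {M : Matrix p p ℝ} (h : M.PosDef) : Mᵀ = M := by
  rw [← conjT_eq]; exact h.isHermitian.eq

end helpers

/-- One-step Bellman update for LQ tracking. -/
lemma lq_step {n m : ℕ} (A : Matrix (Fin n) (Fin n) ℝ) (B : Matrix (Fin n) (Fin m) ℝ)
    (Q P' : Matrix (Fin n) (Fin n) ℝ) (R : Matrix (Fin m) (Fin m) ℝ)
    (θv β' : Fin n → ℝ)
    (hQ : Q.PosDef) (hR : R.PosDef) (hP' : P'.PosDef)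
    (S : Matrix (Fin m) (Fin m) ℝ) (M P Hm : Matrix (Fin n) (Fin n) ℝ)
    (βv : Fin n → ℝ) (K K' : Matrix (Fin m) (Fin n) ℝ)
    (hS : S = R + Bᵀ * P' * B)
    (hM : M = P' - P' * B * S⁻¹ * Bᵀ * P')
    (hP : P = Q + Aᵀ * M * A)
    (hβ : βv = P⁻¹ *ᵥ (Q *ᵥ θv + Aᵀ *ᵥ (M *ᵥ β')))
    (hH : Hm = M - M * A * P⁻¹ * Aᵀ * M)
    (hK : K = S⁻¹ * Bᵀ * P' * A) (hK' : K' = S⁻¹ * Bᵀ * P') :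
    P.PosDef ∧
    (∀ (x : Fin n → ℝ) (u : Fin m → ℝ),
      (1/2) * ((-(K *ᵥ x) + K' *ᵥ β') ⬝ᵥ R *ᵥ (-(K *ᵥ x) + K' *ᵥ β')) +
        (1/2) * ((A *ᵥ x + B *ᵥ (-(K *ᵥ x) + K' *ᵥ β') - β') ⬝ᵥ
          P' *ᵥ (A *ᵥ x + B *ᵥ (-(K *ᵥ x) + K' *ᵥ β') - β'))
      ≤ (1/2) * (u ⬝ᵥ R *ᵥ u) +
          (1/2) * ((A *ᵥ x + B *ᵥ u - β') ⬝ᵥ P' *ᵥ (A *ᵥ x + B *ᵥ u - β'))) ∧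
    (∀ x : Fin n → ℝ,
      (1/2) * ((x - θv) ⬝ᵥ Q *ᵥ (x - θv)) +
        (1/2) * ((-(K *ᵥ x) + K' *ᵥ β') ⬝ᵥ R *ᵥ (-(K *ᵥ x) + K' *ᵥ β')) +
        (1/2) * ((A *ᵥ x + B *ᵥ (-(K *ᵥ x) + K' *ᵥ β') - β') ⬝ᵥ
          P' *ᵥ (A *ᵥ x + B *ᵥ (-(K *ᵥ x) + K' *ᵥ β') - β'))
      = (1/2) * ((x - βv) ⬝ᵥ P *ᵥ (x - βv)) +
        (1/2) * ((A *ᵥ θv - β') ⬝ᵥ Hm *ᵥ (A *ᵥ θv - β'))) := by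
  -- basic symmetry facts
  have hP's : P'ᵀ = P' := symm_of_pd hP'
  have hQs : Qᵀ = Q := symm_of_pd hQ
  have hSpd : S.PosDef := by
    rw [hS]
    refine hR.add_posSemidef ?_
    have := hP'.posSemidef.conjTranspose_mul_mul_same B
    rwa [conjT_eq] at this
  have hSs : Sᵀ = S := symm_of_pd hSpd
  have hSdet : IsUnit S.det := hSpd.det_pos.ne'.isUnit
  have hS1 : S * S⁻¹ = 1 := Matrix.mul_nonsing_inv _ hSdet
  have hS2 : S⁻¹ * S = 1 := Matrix.nonsing_inv_mul _ hSdet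
  have hSi : (S⁻¹)ᵀ = S⁻¹ := by rw [Matrix.transpose_nonsing_inv, hSs]
  have hMs : Mᵀ = M := by
    rw [hM]
    simp only [Matrix.transpose_sub, Matrix.transpose_mul, Matrix.transpose_transpose, hP's, hSi,
      Matrix.mul_assoc]
  -- M is positive semidefinite (Schur-complement style identity)
  have hGF : M = (1 - B * S⁻¹ * Bᵀ * P')ᵀ * P' * (1 - B * S⁻¹ * Bᵀ * P') +
      (S⁻¹ * Bᵀ * P')ᵀ * R * (S⁻¹ * Bᵀ * P') := by
    rw [hM]
    have h1 : ∀ X : Matrix (Fin m) (Fin n) ℝ, Bᵀ * (P' * (B * X)) = S * X - R * X := by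
      intro X
      rw [← Matrix.mul_assoc, ← Matrix.mul_assoc, hS, Matrix.add_mul, add_sub_cancel_left]
    have h2 : ∀ X : Matrix (Fin m) (Fin n) ℝ, S⁻¹ * (S * X) = X :=
      fun X => Matrix.nonsing_inv_mul_cancel_left _ _ hSdet
    simp only [Matrix.transpose_mul, Matrix.transpose_sub, Matrix.transpose_one, hP's, hSi,
      Matrix.transpose_transpose, Matrix.mul_sub, Matrix.sub_mul, Matrix.mul_add, Matrix.add_mul,
      Matrix.mul_one, Matrix.one_mul, Matrix.mul_assoc, h1, h2]
    abel
  have hMpsd : M.PosSemidef := by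
    rw [hGF]
    refine Matrix.PosSemidef.add ?_ ?_
    · have := hP'.posSemidef.conjTranspose_mul_mul_same (1 - B * S⁻¹ * Bᵀ * P')
      rwa [conjT_eq] at this
    · have := hR.posSemidef.conjTranspose_mul_mul_same (S⁻¹ * Bᵀ * P')
      rwa [conjT_eq] at this
  have hPpd : P.PosDef := by
    rw [hP]
    refine hQ.add_posSemidef ?_
    have := hMpsd.conjTranspose_mul_mul_same A
    rwa [conjT_eq] at this
  have hPs : Pᵀ = P := symm_of_pd hPpd
  have hPdet : IsUnit P.det := hPpd.det_pos.ne'.isUnit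
  have hP1 : P * P⁻¹ = 1 := Matrix.mul_nonsing_inv _ hPdet
  have hP2 : P⁻¹ * P = 1 := Matrix.nonsing_inv_mul _ hPdet
  have hPi : (P⁻¹)ᵀ = P⁻¹ := by rw [Matrix.transpose_nonsing_inv, hPs]
  -- the optimal control in closed form
  have hustar : ∀ x : Fin n → ℝ, -(K *ᵥ x) + K' *ᵥ β'
      = -(S⁻¹ *ᵥ (Bᵀ *ᵥ (P' *ᵥ (A *ᵥ x - β')))) := by
    intro x
    simp only [hK, hK', ← Matrix.mulVec_mulVec, Matrix.mulVec_sub]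
    abel
  -- completion of the square in `u`
  have E1 : ∀ (x : Fin n → ℝ) (u : Fin m → ℝ),
      (1/2) * (u ⬝ᵥ R *ᵥ u) +
        (1/2) * ((A *ᵥ x + B *ᵥ u - β') ⬝ᵥ P' *ᵥ (A *ᵥ x + B *ᵥ u - β'))
      = (1/2) * ((u - -(S⁻¹ *ᵥ (Bᵀ *ᵥ (P' *ᵥ (A *ᵥ x - β'))))) ⬝ᵥ
            S *ᵥ (u - -(S⁻¹ *ᵥ (Bᵀ *ᵥ (P' *ᵥ (A *ᵥ x - β'))))))
        + (1/2) * ((A *ᵥ x - β') ⬝ᵥ P' *ᵥ (A *ᵥ x - β'))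
        - (1/2) * ((Bᵀ *ᵥ (P' *ᵥ (A *ᵥ x - β'))) ⬝ᵥ
            S⁻¹ *ᵥ (Bᵀ *ᵥ (P' *ᵥ (A *ᵥ x - β')))) := by
    intro x u
    set w : Fin n → ℝ := A *ᵥ x - β' with hw
    set y : Fin m → ℝ := Bᵀ *ᵥ (P' *ᵥ w) with hy
    clear_value y
    have hrw : A *ᵥ x + B *ᵥ u - β' = w + B *ᵥ u := by rw [hw]; abel
    rw [hrw]
    have h_a : (w + B *ᵥ u) ⬝ᵥ P' *ᵥ (w + B *ᵥ u)
        = w ⬝ᵥ P' *ᵥ w + 2 * (u ⬝ᵥ y) + u ⬝ᵥ (Bᵀ * P' * B) *ᵥ u := by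
      have c1 : w ⬝ᵥ P' *ᵥ (B *ᵥ u) = u ⬝ᵥ y := by
        rw [symdp hP's, dpA, hy, Matrix.mulVec_mulVec, dotProduct_comm]
      have c2 : (B *ᵥ u) ⬝ᵥ P' *ᵥ w = u ⬝ᵥ y := by
        rw [dpA, hy]
      have c3 : (B *ᵥ u) ⬝ᵥ P' *ᵥ (B *ᵥ u) = u ⬝ᵥ (Bᵀ * P' * B) *ᵥ u := by
        rw [dpA, Matrix.mulVec_mulVec, Matrix.mulVec_mulVec, Matrix.mul_assoc]
      simp only [Matrix.mulVec_add, dotProduct_add, add_dotProduct, c1, c2, c3]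
      ring
    have h_b : u ⬝ᵥ R *ᵥ u + u ⬝ᵥ (Bᵀ * P' * B) *ᵥ u = u ⬝ᵥ S *ᵥ u := by
      rw [hS, Matrix.add_mulVec, dotProduct_add]
    have h_c : (u - -(S⁻¹ *ᵥ y)) ⬝ᵥ S *ᵥ (u - -(S⁻¹ *ᵥ y))
        = u ⬝ᵥ S *ᵥ u + 2 * (u ⬝ᵥ y) + y ⬝ᵥ S⁻¹ *ᵥ y := by
      have d1 : u ⬝ᵥ S *ᵥ (S⁻¹ *ᵥ y) = u ⬝ᵥ y := by
        rw [Matrix.mulVec_mulVec, hS1, Matrix.one_mulVec]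
      have d2 : (S⁻¹ *ᵥ y) ⬝ᵥ S *ᵥ u = u ⬝ᵥ y := by
        rw [symdp hSs, d1]
      have d3 : (S⁻¹ *ᵥ y) ⬝ᵥ S *ᵥ (S⁻¹ *ᵥ y) = y ⬝ᵥ S⁻¹ *ᵥ y := by
        rw [show S *ᵥ (S⁻¹ *ᵥ y) = y by rw [Matrix.mulVec_mulVec, hS1, Matrix.one_mulVec]]
        rw [dpA]; rw [hSi]
      simp only [sub_neg_eq_add, Matrix.mulVec_add, dotProduct_add, add_dotProduct, d1, d2, d3]
      ring
    rw [h_c, ← h_b, h_a]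
    ring
  -- quadratic form of `M`
  have E2 : ∀ x : Fin n → ℝ,
      (A *ᵥ x - β') ⬝ᵥ M *ᵥ (A *ᵥ x - β')
      = (A *ᵥ x - β') ⬝ᵥ P' *ᵥ (A *ᵥ x - β')
        - (Bᵀ *ᵥ (P' *ᵥ (A *ᵥ x - β'))) ⬝ᵥ S⁻¹ *ᵥ (Bᵀ *ᵥ (P' *ᵥ (A *ᵥ x - β'))) := by
    intro x
    set w : Fin n → ℝ := A *ᵥ x - β' with hw
    set y : Fin m → ℝ := Bᵀ *ᵥ (P' *ᵥ w) with hy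
    rw [hM, Matrix.sub_mulVec, dotProduct_sub]
    congr 1
    rw [show P' * B * S⁻¹ * Bᵀ * P' = P' * (B * (S⁻¹ * (Bᵀ * P'))) by
        simp only [Matrix.mul_assoc]]
    rw [← Matrix.mulVec_mulVec, ← Matrix.mulVec_mulVec, ← Matrix.mulVec_mulVec,
      ← Matrix.mulVec_mulVec]
    rw [symdp hP's, dpA, dpA, ← hy, dotProduct_comm, dpA]
    simp [hSi]
  -- completion of the square in `x`
  have G4 : ∀ a : Fin n → ℝ,
      a ⬝ᵥ P *ᵥ a = a ⬝ᵥ Q *ᵥ a + (A *ᵥ a) ⬝ᵥ M *ᵥ (A *ᵥ a) := by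
    intro a
    rw [hP, Matrix.add_mulVec, dotProduct_add]
    congr 1
    rw [Matrix.mul_assoc, ← Matrix.mulVec_mulVec, ← dpA, ← Matrix.mulVec_mulVec]
  have E3 : ∀ x : Fin n → ℝ,
      (1/2) * ((x - θv) ⬝ᵥ Q *ᵥ (x - θv)) +
        (1/2) * ((A *ᵥ x - β') ⬝ᵥ M *ᵥ (A *ᵥ x - β'))
      = (1/2) * ((x - βv) ⬝ᵥ P *ᵥ (x - βv)) +
        (1/2) * ((A *ᵥ θv - β') ⬝ᵥ Hm *ᵥ (A *ᵥ θv - β')) := by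
    intro x
    set v : Fin n → ℝ := Q *ᵥ θv + Aᵀ *ᵥ (M *ᵥ β') with hv
    set z0 : Fin n → ℝ := A *ᵥ θv - β' with hz0
    set z : Fin n → ℝ := Aᵀ *ᵥ (M *ᵥ z0) with hz
    clear_value v z0 z
    have G1 : (x - θv) ⬝ᵥ Q *ᵥ (x - θv)
        = x ⬝ᵥ Q *ᵥ x - 2 * (x ⬝ᵥ Q *ᵥ θv) + θv ⬝ᵥ Q *ᵥ θv := by
      have e1 : θv ⬝ᵥ Q *ᵥ x = x ⬝ᵥ Q *ᵥ θv := symdp hQs θv x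
      simp only [Matrix.mulVec_sub, dotProduct_sub, sub_dotProduct, e1]
      ring
    have G2 : (A *ᵥ x - β') ⬝ᵥ M *ᵥ (A *ᵥ x - β')
        = (A *ᵥ x) ⬝ᵥ M *ᵥ (A *ᵥ x) - 2 * ((A *ᵥ x) ⬝ᵥ M *ᵥ β') + β' ⬝ᵥ M *ᵥ β' := by
      have e1 : β' ⬝ᵥ M *ᵥ (A *ᵥ x) = (A *ᵥ x) ⬝ᵥ M *ᵥ β' := symdp hMs β' (A *ᵥ x)
      simp only [Matrix.mulVec_sub, dotProduct_sub, sub_dotProduct, e1]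
      ring
    have G5 : P *ᵥ βv = v := by
      rw [hβ, Matrix.mulVec_mulVec, Matrix.mul_nonsing_inv _ hPdet, Matrix.one_mulVec]
    have G3 : (x - βv) ⬝ᵥ P *ᵥ (x - βv)
        = x ⬝ᵥ P *ᵥ x - 2 * (x ⬝ᵥ v) + v ⬝ᵥ P⁻¹ *ᵥ v := by
      have e1 : βv ⬝ᵥ P *ᵥ x = x ⬝ᵥ v := by rw [symdp hPs, G5]
      have e2 : βv ⬝ᵥ v = v ⬝ᵥ P⁻¹ *ᵥ v := by rw [hβ, dotProduct_comm]
      simp only [Matrix.mulVec_sub, dotProduct_sub, sub_dotProduct, G5, e1, e2]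
      ring
    have G6 : x ⬝ᵥ v = x ⬝ᵥ Q *ᵥ θv + (A *ᵥ x) ⬝ᵥ M *ᵥ β' := by
      rw [hv, dotProduct_add]
      congr 1
      rw [← dpA]
    have G8 : v = P *ᵥ θv - z := by
      rw [hv, hz, hz0, hP]
      simp only [Matrix.add_mulVec, Matrix.mulVec_sub, ← Matrix.mulVec_mulVec]
      abel
    have G9 : v ⬝ᵥ P⁻¹ *ᵥ v = θv ⬝ᵥ P *ᵥ θv - 2 * (θv ⬝ᵥ z) + z ⬝ᵥ P⁻¹ *ᵥ z := by
      have t1 : (P *ᵥ θv) ⬝ᵥ P⁻¹ *ᵥ (P *ᵥ θv) = θv ⬝ᵥ P *ᵥ θv := by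
        rw [Matrix.mulVec_mulVec, hP2, Matrix.one_mulVec, dotProduct_comm]
      have t2 : (P *ᵥ θv) ⬝ᵥ P⁻¹ *ᵥ z = θv ⬝ᵥ z := by
        rw [dpA, hPs, Matrix.mulVec_mulVec, hP1, Matrix.one_mulVec]
      have t3 : z ⬝ᵥ P⁻¹ *ᵥ (P *ᵥ θv) = θv ⬝ᵥ z := by
        rw [Matrix.mulVec_mulVec, hP2, Matrix.one_mulVec, dotProduct_comm]
      rw [G8]
      simp only [Matrix.mulVec_sub, dotProduct_sub, sub_dotProduct, t1, t2, t3]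
      ring
    have G10 : θv ⬝ᵥ z = (A *ᵥ θv) ⬝ᵥ M *ᵥ (A *ᵥ θv) - (A *ᵥ θv) ⬝ᵥ M *ᵥ β' := by
      rw [hz, ← dpA, hz0, Matrix.mulVec_sub, dotProduct_sub]
    have G12 : z0 ⬝ᵥ Hm *ᵥ z0 = z0 ⬝ᵥ M *ᵥ z0 - z ⬝ᵥ P⁻¹ *ᵥ z := by
      rw [hH, Matrix.sub_mulVec, dotProduct_sub]
      congr 1
      rw [show M * A * P⁻¹ * Aᵀ * M = M * (A * (P⁻¹ * (Aᵀ * M))) by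
          simp only [Matrix.mul_assoc]]
      rw [← Matrix.mulVec_mulVec, ← Matrix.mulVec_mulVec, ← Matrix.mulVec_mulVec,
        ← Matrix.mulVec_mulVec]
      rw [symdp hMs, dpA, dpA, ← hz, dotProduct_comm, dpA]
      simp [hPi]
    have G13 : z0 ⬝ᵥ M *ᵥ z0
        = (A *ᵥ θv) ⬝ᵥ M *ᵥ (A *ᵥ θv) - 2 * ((A *ᵥ θv) ⬝ᵥ M *ᵥ β') + β' ⬝ᵥ M *ᵥ β' := by
      have e1 : β' ⬝ᵥ M *ᵥ (A *ᵥ θv) = (A *ᵥ θv) ⬝ᵥ M *ᵥ β' := symdp hMs β' (A *ᵥ θv)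
      rw [hz0]
      simp only [Matrix.mulVec_sub, dotProduct_sub, sub_dotProduct, e1]
      ring
    have G4x := G4 x
    have G4θ := G4 θv
    linarith [G1, G2, G3, G6, G9, G10, G12, G13, G4x, G4θ]
  -- assemble the conclusions
  refine ⟨hPpd, ?_, ?_⟩
  · intro x u
    have Eu := E1 x u
    have Estar := E1 x (-(S⁻¹ *ᵥ (Bᵀ *ᵥ (P' *ᵥ (A *ᵥ x - β')))))
    rw [sub_self] at Estar
    simp only [Matrix.mulVec_zero, dotProduct_zero] at Estar
    have hq : 0 ≤ (u - -(S⁻¹ *ᵥ (Bᵀ *ᵥ (P' *ᵥ (A *ᵥ x - β'))))) ⬝ᵥ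
        S *ᵥ (u - -(S⁻¹ *ᵥ (Bᵀ *ᵥ (P' *ᵥ (A *ᵥ x - β'))))) := by
      simpa using hSpd.posSemidef.dotProduct_mulVec_nonneg (u - -(S⁻¹ *ᵥ (Bᵀ *ᵥ (P' *ᵥ (A *ᵥ x - β')))))
    rw [hustar x]
    linarith [Eu, Estar, hq]
  · intro x
    have Estar := E1 x (-(S⁻¹ *ᵥ (Bᵀ *ᵥ (P' *ᵥ (A *ᵥ x - β')))))
    rw [sub_self] at Estar
    simp only [Matrix.mulVec_zero, dotProduct_zero] at Estar
    have h2 := E2 x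
    have h3 := E3 x
    rw [hustar x]
    linarith [Estar, h2, h3]

/-- Theorem 4 (dynamic programming for finite-horizon time-varying LQ tracking): with the
backward Riccati recursion `P_t, M_t, β_t, H_t, K_t, K'_t`, each `P_t` is positive
definite, the infimum in the Bellman recursion for the value function `V_t` is attained at
`u*_t = −K_t x + K'_t β_{t+1}`, and
`V_t(x) = ½(x−β_t)ᵀP_t(x−β_t) + ½ ∑_{k=t}^{N−1}(Aθ_k−β_{k+1})ᵀH_k(Aθ_k−β_{k+1})`. -/
theorem stmt_10 {n m : ℕ} (A : Matrix (Fin n) (Fin n) ℝ) (B : Matrix (Fin n) (Fin m) ℝ)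
    (N : ℕ) (hN : 1 ≤ N)
    (Q : ℕ → Matrix (Fin n) (Fin n) ℝ) (θ : ℕ → Fin n → ℝ)
    (R : ℕ → Matrix (Fin m) (Fin m) ℝ)
    (hQ : ∀ t ≤ N, (Q t).PosDef)
    (hR : ∀ t < N, (R t).PosDef)
    (P M H : ℕ → Matrix (Fin n) (Fin n) ℝ)
    (β : ℕ → Fin n → ℝ)
    (K K' : ℕ → Matrix (Fin m) (Fin n) ℝ)
    (hPN : P N = Q N) (hβN : β N = θ N)
    (hM : ∀ t < N, M t =
      P (t + 1) - P (t + 1) * B * (R t + Bᵀ * P (t + 1) * B)⁻¹ * Bᵀ * P (t + 1))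
    (hP : ∀ t < N, P t = Q t + Aᵀ * M t * A)
    (hβ : ∀ t < N, β t =
      (P t)⁻¹.mulVec ((Q t).mulVec (θ t) + Aᵀ.mulVec ((M t).mulVec (β (t + 1)))))
    (hH : ∀ t < N, H t = M t - M t * A * (P t)⁻¹ * Aᵀ * M t)
    (hK : ∀ t < N, K t = (R t + Bᵀ * P (t + 1) * B)⁻¹ * Bᵀ * P (t + 1) * A)
    (hK' : ∀ t < N, K' t = (R t + Bᵀ * P (t + 1) * B)⁻¹ * Bᵀ * P (t + 1))
    (V : ℕ → (Fin n → ℝ) → ℝ)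
    (hVN : ∀ x : Fin n → ℝ,
      V N x = (1 / 2) * ((x - θ N) ⬝ᵥ (Q N).mulVec (x - θ N)))
    (hVt : ∀ t < N, ∀ x : Fin n → ℝ, V t x = ⨅ u : Fin m → ℝ,
      (1 / 2) * ((x - θ t) ⬝ᵥ (Q t).mulVec (x - θ t)) +
        (1 / 2) * (u ⬝ᵥ (R t).mulVec u) + V (t + 1) (A.mulVec x + B.mulVec u)) :
    (∀ t ≤ N, (P t).PosDef) ∧
    (∀ t < N, ∀ x : Fin n → ℝ, ∀ u : Fin m → ℝ,
      (1 / 2) * ((x - θ t) ⬝ᵥ (Q t).mulVec (x - θ t)) +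
          (1 / 2) * ((-(K t).mulVec x + (K' t).mulVec (β (t + 1))) ⬝ᵥ
            (R t).mulVec (-(K t).mulVec x + (K' t).mulVec (β (t + 1)))) +
          V (t + 1) (A.mulVec x + B.mulVec (-(K t).mulVec x + (K' t).mulVec (β (t + 1))))
        ≤ (1 / 2) * ((x - θ t) ⬝ᵥ (Q t).mulVec (x - θ t)) +
            (1 / 2) * (u ⬝ᵥ (R t).mulVec u) + V (t + 1) (A.mulVec x + B.mulVec u)) ∧
    (∀ t < N, ∀ x : Fin n → ℝ,
      V t x = (1 / 2) * ((x - θ t) ⬝ᵥ (Q t).mulVec (x - θ t)) +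
          (1 / 2) * ((-(K t).mulVec x + (K' t).mulVec (β (t + 1))) ⬝ᵥ
            (R t).mulVec (-(K t).mulVec x + (K' t).mulVec (β (t + 1)))) +
          V (t + 1)
            (A.mulVec x + B.mulVec (-(K t).mulVec x + (K' t).mulVec (β (t + 1))))) ∧
    (∀ t ≤ N, ∀ x : Fin n → ℝ,
      V t x = (1 / 2) * ((x - β t) ⬝ᵥ (P t).mulVec (x - β t)) +
        (1 / 2) * ∑ k ∈ Finset.Ico t N,
          ((A.mulVec (θ k) - β (k + 1)) ⬝ᵥ (H k).mulVec (A.mulVec (θ k) - β (k + 1)))) := by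
  classical
  -- the invariant, proved by backward induction
  have inv : ∀ d t, t + d = N → (P t).PosDef ∧ ∀ x : Fin n → ℝ,
      V t x = (1 / 2) * ((x - β t) ⬝ᵥ (P t).mulVec (x - β t)) +
        (1 / 2) * ∑ k ∈ Finset.Ico t N,
          ((A.mulVec (θ k) - β (k + 1)) ⬝ᵥ (H k).mulVec (A.mulVec (θ k) - β (k + 1))) := by
    intro d
    induction d with
    | zero =>
      intro t ht
      have htN : t = N := by omega
      subst htN
      refine ⟨hPN ▸ hQ t le_rfl, fun x => ?_⟩
      rw [hVN x, hPN, hβN, Finset.Ico_self, Finset.sum_empty]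
      ring
    | succ d ih =>
      intro t ht
      have htN : t < N := by omega
      obtain ⟨hP'pd, hV'⟩ := ih (t + 1) (by omega)
      obtain ⟨hPpd, hineq, heq⟩ := lq_step A B (Q t) (P (t + 1)) (R t) (θ t) (β (t + 1))
        (hQ t htN.le) (hR t htN) hP'pd (R t + Bᵀ * P (t + 1) * B) (M t) (P t) (H t) (β t)
        (K t) (K' t) rfl (hM t htN) (hP t htN) (hβ t htN) (hH t htN) (hK t htN) (hK' t htN)
      refine ⟨hPpd, fun x => ?_⟩
      rw [hVt t htN x]
      set c : ℝ := (1 / 2) * ∑ k ∈ Finset.Ico (t + 1) N,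
          ((A.mulVec (θ k) - β (k + 1)) ⬝ᵥ (H k).mulVec (A.mulVec (θ k) - β (k + 1))) with hc
      have hsplit : (1 / 2) * ∑ k ∈ Finset.Ico t N,
          ((A.mulVec (θ k) - β (k + 1)) ⬝ᵥ (H k).mulVec (A.mulVec (θ k) - β (k + 1)))
          = (1 / 2) * ((A *ᵥ θ t - β (t + 1)) ⬝ᵥ (H t) *ᵥ (A *ᵥ θ t - β (t + 1))) + c := by
        rw [hc, Finset.sum_eq_sum_Ico_succ_bot htN]
        ring
      set g : (Fin m → ℝ) → ℝ := fun u =>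
        (1 / 2) * ((x - θ t) ⬝ᵥ (Q t) *ᵥ (x - θ t)) +
          ((1 / 2) * (u ⬝ᵥ (R t) *ᵥ u) +
            (1 / 2) * ((A *ᵥ x + B *ᵥ u - β (t + 1)) ⬝ᵥ
              (P (t + 1)) *ᵥ (A *ᵥ x + B *ᵥ u - β (t + 1)))) + c with hg
      have hFval : ∀ u : Fin m → ℝ,
          (1 / 2) * ((x - θ t) ⬝ᵥ (Q t).mulVec (x - θ t)) +
            (1 / 2) * (u ⬝ᵥ (R t).mulVec u) + V (t + 1) (A.mulVec x + B.mulVec u)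
          = g u := by
        intro u
        rw [hV' (A *ᵥ x + B *ᵥ u), hg]
        ring
      have hglow : ∀ u, g (-(K t *ᵥ x) + K' t *ᵥ β (t + 1)) ≤ g u := by
        intro u
        have h := hineq x u
        rw [hg]
        simp only
        linarith
      have hiInf : (⨅ u : Fin m → ℝ,
          (1 / 2) * ((x - θ t) ⬝ᵥ (Q t).mulVec (x - θ t)) +
            (1 / 2) * (u ⬝ᵥ (R t).mulVec u) + V (t + 1) (A.mulVec x + B.mulVec u))
          = g (-(K t *ᵥ x) + K' t *ᵥ β (t + 1)) := by
        rw [iInf_congr hFval]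
        refine le_antisymm (ciInf_le ⟨g (-(K t *ᵥ x) + K' t *ᵥ β (t + 1)), ?_⟩ _)
          (le_ciInf hglow)
        rintro v ⟨u, rfl⟩
        exact hglow u
      rw [hiInf, hg]
      simp only
      have h3 := heq x
      linarith
  have inv' : ∀ t ≤ N, (P t).PosDef ∧ ∀ x : Fin n → ℝ,
      V t x = (1 / 2) * ((x - β t) ⬝ᵥ (P t).mulVec (x - β t)) +
        (1 / 2) * ∑ k ∈ Finset.Ico t N,
          ((A.mulVec (θ k) - β (k + 1)) ⬝ᵥ (H k).mulVec (A.mulVec (θ k) - β (k + 1))) :=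
    fun t ht => inv (N - t) t (by omega)
  have key : ∀ t, t < N → _ := fun t ht =>
    lq_step A B (Q t) (P (t + 1)) (R t) (θ t) (β (t + 1))
      (hQ t ht.le) (hR t ht) (inv' (t + 1) ht).1 (R t + Bᵀ * P (t + 1) * B) (M t) (P t) (H t)
      (β t) (K t) (K' t) rfl (hM t ht) (hP t ht) (hβ t ht) (hH t ht) (hK t ht) (hK' t ht)
  refine ⟨fun t ht => (inv' t ht).1, ?_, ?_, fun t ht x => ((inv' t ht).2 x)⟩
  · intro t ht x u
    simp only [(inv' (t + 1) ht).2]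
    have h := (key t ht).2.1 x u
    linarith
  · intro t ht x
    rw [(inv' t ht.le).2 x, (inv' (t + 1) ht).2]
    have h := (key t ht).2.2 x
    have hsplit : ∑ k ∈ Finset.Ico t N,
        ((A.mulVec (θ k) - β (k + 1)) ⬝ᵥ (H k).mulVec (A.mulVec (θ k) - β (k + 1)))
        = ((A *ᵥ θ t - β (t + 1)) ⬝ᵥ (H t) *ᵥ (A *ᵥ θ t - β (t + 1))) +
          ∑ k ∈ Finset.Ico (t + 1) N,
            ((A.mulVec (θ k) - β (k + 1)) ⬝ᵥ (H k).mulVec (A.mulVec (θ k) - β (k + 1))) :=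
      Finset.sum_eq_sum_Ico_succ_bot ht _
    linarith
end

section
/- Let A ∈ ℝ^{n×n}, B ∈ ℝ^{n×m}. Let Q̲, Q̄ ∈ ℝ^{n×n} and R̲, R̄ ∈ ℝ^{m×m} be symmetric positive definite with Q̲ ⪯ Q̄ and R̲ ⪯ R̄. Suppose P̲ and P̄ are symmetric positive-definite solutions of the discrete-time algebraic Riccati equations P = Q̲ + Aᵀ(P − PB(R̲ + BᵀPB)^{−1}BᵀP)A and P = Q̄ + Aᵀ(P − PB(R̄ + BᵀPB)^{−1}BᵀP)A respectively. Let N ≥ 1, let Q_t (0 ≤ t ≤ N−1) and R_t (0 ≤ t ≤ N−1) be symmetric matrices with Q̲ ⪯ Q_t ⪯ Q̄ and R̲ ⪯ R_t ⪯ R̄, let P_N be symmetric with P̲ ⪯ P_N ⪯ P̄, and define backward the Riccati recursion P_t = Q_t + Aᵀ(P_{t+1} − P_{t+1}B(R_t + BᵀP_{t+1}B)^{−1}BᵀP_{t+1})A for t = N−1, …, 0. Then P̲ ⪯ P_t ⪯ P̄ for all 0 ≤ t ≤ N. -/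
open Matrix

lemma ric_completion {n m : ℕ} (A : Matrix (Fin n) (Fin n) ℝ) (B : Matrix (Fin n) (Fin m) ℝ)
    (P Q : Matrix (Fin n) (Fin n) ℝ) (R : Matrix (Fin m) (Fin m) ℝ)
    (hPsd : P.PosSemidef) (hR : R.PosDef) (K : Matrix (Fin m) (Fin n) ℝ) :
    Q + Kᵀ * R * K + (A - B * K)ᵀ * P * (A - B * K) =
      (Q + Aᵀ * (P - P * B * (R + Bᵀ * P * B)⁻¹ * Bᵀ * P) * A) +
      (K - (R + Bᵀ * P * B)⁻¹ * Bᵀ * P * A)ᵀ * (R + Bᵀ * P * B) *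
        (K - (R + Bᵀ * P * B)⁻¹ * Bᵀ * P * A) := by
  have hP : Pᵀ = P := by
    rw [← conjTranspose_eq_transpose_of_trivial]; exact hPsd.isHermitian
  have hBPB : (Bᵀ * P * B).PosSemidef := by
    have := hPsd.conjTranspose_mul_mul_same B
    rwa [conjTranspose_eq_transpose_of_trivial] at this
  have hS : (R + Bᵀ * P * B).PosDef := hR.add_posSemidef hBPB
  set S := R + Bᵀ * P * B with hSdef
  have hdet : IsUnit S.det := (Matrix.isUnit_iff_isUnit_det S).1 hS.isUnit
  have hinv1 : S * S⁻¹ = 1 := Matrix.mul_nonsing_inv S hdet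
  have hinv2 : S⁻¹ * S = 1 := Matrix.nonsing_inv_mul S hdet
  have hSt : Sᵀ = S := by
    rw [← conjTranspose_eq_transpose_of_trivial]; exact hS.isHermitian
  have hGt : (S⁻¹)ᵀ = S⁻¹ := by rw [Matrix.transpose_nonsing_inv, hSt]
  set K0 := S⁻¹ * Bᵀ * P * A with hK0def
  have e1 : S * K0 = Bᵀ * P * A := by
    rw [hK0def]
    simp only [← Matrix.mul_assoc]
    rw [hinv1, Matrix.one_mul]
  have e2 : K0ᵀ * S = Aᵀ * P * B := by
    rw [hK0def]
    simp only [Matrix.transpose_mul, hGt, hP, Matrix.mul_assoc]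
    rw [hinv2]
    simp [Matrix.mul_assoc]
  have expand : (K - K0)ᵀ * S * (K - K0) =
      Kᵀ * S * K - Kᵀ * (Bᵀ * P * A) - Aᵀ * P * B * K + Aᵀ * P * B * K0 := by
    rw [transpose_sub, Matrix.sub_mul, Matrix.sub_mul, Matrix.mul_sub, Matrix.mul_sub,
      Matrix.mul_assoc Kᵀ S K0, e1, e2]
    abel
  rw [expand, hSdef, hK0def]
  simp only [Matrix.mul_sub, Matrix.sub_mul, Matrix.mul_add, Matrix.add_mul,
    Matrix.transpose_sub, Matrix.transpose_mul, hP, Matrix.mul_assoc]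
  abel_nf
  simp only [hSdef, Matrix.mul_assoc]
  abel

lemma ric_mono {n m : ℕ} (A : Matrix (Fin n) (Fin n) ℝ) (B : Matrix (Fin n) (Fin m) ℝ)
    (P₁ Q₁ P₂ Q₂ : Matrix (Fin n) (Fin n) ℝ) (R₁ R₂ : Matrix (Fin m) (Fin m) ℝ)
    (hP1 : P₁.PosSemidef) (hP2 : P₂.PosSemidef) (hR1 : R₁.PosDef) (hR2 : R₂.PosDef)
    (hPd : (P₂ - P₁).PosSemidef) (hQd : (Q₂ - Q₁).PosSemidef) (hRd : (R₂ - R₁).PosSemidef) :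
    ((Q₂ + Aᵀ * (P₂ - P₂ * B * (R₂ + Bᵀ * P₂ * B)⁻¹ * Bᵀ * P₂) * A) -
     (Q₁ + Aᵀ * (P₁ - P₁ * B * (R₁ + Bᵀ * P₁ * B)⁻¹ * Bᵀ * P₁) * A)).PosSemidef := by
  set K := (R₂ + Bᵀ * P₂ * B)⁻¹ * Bᵀ * P₂ * A with hK
  have hBPB1 : (Bᵀ * P₁ * B).PosSemidef := by
    have := hP1.conjTranspose_mul_mul_same B
    rwa [conjTranspose_eq_transpose_of_trivial] at this
  have hS1 : (R₁ + Bᵀ * P₁ * B).PosDef := hR1.add_posSemidef hBPB1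
  have id2 := ric_completion A B P₂ Q₂ R₂ hP2 hR2 K
  rw [← hK, sub_self] at id2
  simp only [Matrix.transpose_zero, Matrix.zero_mul, Matrix.mul_zero, add_zero] at id2
  have id1 := ric_completion A B P₁ Q₁ R₁ hP1 hR1 K
  set D := (K - (R₁ + Bᵀ * P₁ * B)⁻¹ * Bᵀ * P₁ * A)ᵀ * (R₁ + Bᵀ * P₁ * B) *
      (K - (R₁ + Bᵀ * P₁ * B)⁻¹ * Bᵀ * P₁ * A) with hD
  have hRic1 : Q₁ + Aᵀ * (P₁ - P₁ * B * (R₁ + Bᵀ * P₁ * B)⁻¹ * Bᵀ * P₁) * A =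
      (Q₁ + Kᵀ * R₁ * K + (A - B * K)ᵀ * P₁ * (A - B * K)) - D :=
    eq_sub_of_add_eq id1.symm
  rw [← id2, hRic1]
  have main : (Q₂ + Kᵀ * R₂ * K + (A - B * K)ᵀ * P₂ * (A - B * K)) -
      ((Q₁ + Kᵀ * R₁ * K + (A - B * K)ᵀ * P₁ * (A - B * K)) - D) =
      (Q₂ - Q₁) + Kᵀ * (R₂ - R₁) * K + (A - B * K)ᵀ * (P₂ - P₁) * (A - B * K) + D := by
    simp only [Matrix.mul_sub, Matrix.sub_mul]
    abel
  rw [main]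
  have h1 : (Kᵀ * (R₂ - R₁) * K).PosSemidef := by
    have := hRd.conjTranspose_mul_mul_same K
    rwa [conjTranspose_eq_transpose_of_trivial] at this
  have h2 : ((A - B * K)ᵀ * (P₂ - P₁) * (A - B * K)).PosSemidef := by
    have := hPd.conjTranspose_mul_mul_same (A - B * K)
    rwa [conjTranspose_eq_transpose_of_trivial] at this
  have h3 : D.PosSemidef := by
    rw [hD]
    have := hS1.posSemidef.conjTranspose_mul_mul_same (K - (R₁ + Bᵀ * P₁ * B)⁻¹ * Bᵀ * P₁ * A)
    rwa [conjTranspose_eq_transpose_of_trivial] at this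
  exact ((hQd.add h1).add h2).add h3
/-- "Bounded `P_t`" Lemma (Appendix G): if the time-varying cost matrices are sandwiched,
`Q̲ ⪯ Q_t ⪯ Q̄`, `R̲ ⪯ R_t ⪯ R̄`, the terminal matrix satisfies `P̲ ⪯ P_N ⪯ P̄` where
`P̲, P̄` solve the respective algebraic Riccati equations, then the whole backward Riccati
recursion stays sandwiched: `P̲ ⪯ P_t ⪯ P̄` for all `t ≤ N`. -/
theorem stmt_11 {n m : ℕ} (A : Matrix (Fin n) (Fin n) ℝ) (B : Matrix (Fin n) (Fin m) ℝ)
    (Qlo Qhi Plo Phi : Matrix (Fin n) (Fin n) ℝ) (Rlo Rhi : Matrix (Fin m) (Fin m) ℝ)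
    (hQlo : Qlo.PosDef) (hQhi : Qhi.PosDef) (hRlo : Rlo.PosDef) (hRhi : Rhi.PosDef)
    (hQle : (Qhi - Qlo).PosSemidef) (hRle : (Rhi - Rlo).PosSemidef)
    (hPlo : Plo.PosDef) (hPhi : Phi.PosDef)
    (hPloEq : Plo = Qlo + Aᵀ * (Plo - Plo * B * (Rlo + Bᵀ * Plo * B)⁻¹ * Bᵀ * Plo) * A)
    (hPhiEq : Phi = Qhi + Aᵀ * (Phi - Phi * B * (Rhi + Bᵀ * Phi * B)⁻¹ * Bᵀ * Phi) * A)
    (N : ℕ) (hN : 1 ≤ N)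
    (Q : ℕ → Matrix (Fin n) (Fin n) ℝ) (R : ℕ → Matrix (Fin m) (Fin m) ℝ)
    (hQsymm : ∀ t < N, (Q t).IsSymm) (hRsymm : ∀ t < N, (R t).IsSymm)
    (hQlo' : ∀ t < N, (Q t - Qlo).PosSemidef) (hQhi' : ∀ t < N, (Qhi - Q t).PosSemidef)
    (hRlo' : ∀ t < N, (R t - Rlo).PosSemidef) (hRhi' : ∀ t < N, (Rhi - R t).PosSemidef)
    (P : ℕ → Matrix (Fin n) (Fin n) ℝ)
    (hPNsymm : (P N).IsSymm)
    (hPNlo : (P N - Plo).PosSemidef) (hPNhi : (Phi - P N).PosSemidef)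
    (hPrec : ∀ t < N, P t = Q t +
      Aᵀ * (P (t + 1) - P (t + 1) * B * (R t + Bᵀ * P (t + 1) * B)⁻¹ * Bᵀ * P (t + 1)) * A) :
    ∀ t ≤ N, (P t - Plo).PosSemidef ∧ (Phi - P t).PosSemidef := by
  have key : ∀ d t, t + d = N → (P t - Plo).PosSemidef ∧ (Phi - P t).PosSemidef := by
    intro d
    induction d with
    | zero =>
      intro t ht
      have : t = N := by omega
      subst this
      exact ⟨hPNlo, hPNhi⟩
    | succ d ih =>
      intro t ht
      have h2 := ih (t + 1) (by omega)
      have htN : t < N := by omega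
      have hP1pd : (P (t + 1)).PosDef := by
        have := Matrix.PosDef.posSemidef_add h2.1 hPlo
        rwa [sub_add_cancel] at this
      have hRt : (R t).PosDef := by
        have := Matrix.PosDef.posSemidef_add (hRlo' t htN) hRlo
        rwa [sub_add_cancel] at this
      constructor
      · rw [hPrec t htN]
        rw [hPloEq]
        exact ric_mono A B Plo Qlo (P (t + 1)) (Q t) Rlo (R t)
          hPlo.posSemidef hP1pd.posSemidef hRlo hRt h2.1 (hQlo' t htN) (hRlo' t htN)
      · rw [hPrec t htN]
        rw [hPhiEq]
        exact ric_mono A B (P (t + 1)) (Q t) Phi Qhi (R t) Rhi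
          hP1pd.posSemidef hPhi.posSemidef hRt hRhi h2.2 (hQhi' t htN) (hRhi' t htN)
  exact fun t ht => key (N - t) t (by omega)
end
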